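/- For all P, Q ∈ pCSP: (1) if P ⊑_pmay Q then P ⊑̄_pmay Q; (2) if P ⊑_pmust Q then P ⊑̄_pmust Q. That is, state-based testing is at least as discriminating as action-based testing. -/

import Mathlib

open Classical

noncomputable section

namespace PaperPCSP

/-! ### Finitely supported distributions as weight functions -/

/-- Weight functions on `X`; probability distributions are those satisfying `IsDist`. -/
abbrev Wt (X : Type) := X → ℝ

/-- The support of a weight function. -/
def dsupp {X : Type} (Δ : Wt X) : Set X := Function.support Δ

/-- `Δ` is a finitely supported probability distribution. -/
def IsDist {X : Type} (Δ : Wt X) : Prop :=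
  (∀ x, 0 ≤ Δ x) ∧ (dsupp Δ).Finite ∧ ∑ᶠ x, Δ x = 1

/-- The point distribution at `x`. -/
def dirac {X : Type} (x : X) : Wt X := fun y => if y = x then 1 else 0

/-- Pushforward of a weight function along a map. -/
def dmap {X Y : Type} (g : X → Y) (Δ : Wt X) : Wt Y :=
  fun y => ∑ᶠ x ∈ {x | g x = y}, Δ x

/-- Expected value of `f` under `Δ`. -/
def dexp {X : Type} (Δ : Wt X) (f : X → ℝ) : ℝ := ∑ᶠ x, Δ x * f x

/-! ### Syntax of pCSP -/

mutual
/-- Process terms of pCSP (over prefix alphabet `A`). -/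
inductive PCSP (A : Type) : Type where
  | st : SCSP A → PCSP A
  | pch : ℝ → PCSP A → PCSP A → PCSP A
/-- State-based process terms of pCSP. -/
inductive SCSP (A : Type) : Type where
  | nil : SCSP A
  | pre : A → PCSP A → SCSP A
  | ich : PCSP A → PCSP A → SCSP A
  | ech : SCSP A → SCSP A → SCSP A
  | par : Set A → SCSP A → SCSP A → SCSP A
end

mutual
/-- Well-formedness: all probabilistic choices have `p ∈ (0,1)`.  `pCSP` proper
consists of the well-formed terms. -/
inductive PWF : {A : Type} → PCSP A → Prop where
  | st {A} {s : SCSP A} : SWF s → PWF (.st s)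
  | pch {A} {p : ℝ} {P Q : PCSP A} : 0 < p → p < 1 → PWF P → PWF Q → PWF (.pch p P Q)
inductive SWF : {A : Type} → SCSP A → Prop where
  | nil {A} : SWF (SCSP.nil (A := A))
  | pre {A} {a : A} {P} : PWF P → SWF (.pre a P)
  | ich {A} {P Q : PCSP A} : PWF P → PWF Q → SWF (.ich P Q)
  | ech {A} {s t : SCSP A} : SWF s → SWF t → SWF (.ech s t)
  | par {A} {B : Set A} {s t : SCSP A} : SWF s → SWF t → SWF (.par B s t)
end

/-- Interpretation of process terms as distributions over state-based terms. -/
def PCSP.interp {A : Type} : PCSP A → Wt (SCSP A)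
  | .st s => dirac s
  | .pch p P Q => fun t => p * P.interp t + (1 - p) * Q.interp t

/-! ### Operational semantics -/

/-- The probabilistic labelled transition relation; `none` is the internal action τ. -/
inductive Step {A : Type} : SCSP A → Option A → Wt (SCSP A) → Prop where
  | pre (a : A) (P : PCSP A) : Step (.pre a P) (some a) P.interp
  | ichL (P Q : PCSP A) : Step (.ich P Q) none P.interp
  | ichR (P Q : PCSP A) : Step (.ich P Q) none Q.interp
  | echL {s₁ s₂ : SCSP A} {a : A} {Δ} :
      Step s₁ (some a) Δ → Step (.ech s₁ s₂) (some a) Δ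
  | echR {s₁ s₂ : SCSP A} {a : A} {Δ} :
      Step s₂ (some a) Δ → Step (.ech s₁ s₂) (some a) Δ
  | echTL {s₁ s₂ : SCSP A} {Δ} :
      Step s₁ none Δ → Step (.ech s₁ s₂) none (dmap (fun t => .ech t s₂) Δ)
  | echTR {s₁ s₂ : SCSP A} {Δ} :
      Step s₂ none Δ → Step (.ech s₁ s₂) none (dmap (fun t => .ech s₁ t) Δ)
  | parL {B : Set A} {s₁ s₂ : SCSP A} {α : Option A} {Δ} :
      Step s₁ α Δ → (∀ a, α = some a → a ∉ B) →
      Step (.par B s₁ s₂) α (dmap (fun t => .par B t s₂) Δ)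
  | parR {B : Set A} {s₁ s₂ : SCSP A} {α : Option A} {Δ} :
      Step s₂ α Δ → (∀ a, α = some a → a ∉ B) →
      Step (.par B s₁ s₂) α (dmap (fun t => .par B s₁ t) Δ)
  | parS {B : Set A} {s₁ s₂ : SCSP A} {a : A} {Δ₁ Δ₂} :
      a ∈ B → Step s₁ (some a) Δ₁ → Step s₂ (some a) Δ₂ →
      Step (.par B s₁ s₂) none
        (dmap (fun q : SCSP A × SCSP A => .par B q.1 q.2) (fun q => Δ₁ q.1 * Δ₂ q.2))

/-! ### Lifting relations to distributions, weak transitions -/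

/-- Lifting of a state-vs-distribution relation to distributions. -/
def Lift {A : Type} (R : SCSP A → Wt (SCSP A) → Prop) (Δ Θ : Wt (SCSP A)) : Prop :=
  ∃ (n : ℕ) (p : Fin n → ℝ) (s : Fin n → SCSP A) (Φ : Fin n → Wt (SCSP A)),
    (∀ i, 0 ≤ p i) ∧ (∑ i, p i = 1) ∧
    (Δ = fun t => ∑ i, p i * dirac (s i) t) ∧
    (∀ i, R (s i) (Φ i)) ∧
    (Θ = fun t => ∑ i, p i * Φ i t)

/-- The transition relation lifted to distributions. -/
def StepD {A : Type} (α : Option A) : Wt (SCSP A) → Wt (SCSP A) → Prop :=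
  Lift (fun s Δ => Step s α Δ)

/-- `s --τ̂--> Δ` : a τ-step or staying put. -/
def stepTauHat {A : Type} (s : SCSP A) (Δ : Wt (SCSP A)) : Prop :=
  Step s none Δ ∨ Δ = dirac s

/-- `==τ̂==>` : reflexive-transitive closure of the lifted `--τ̂-->`. -/
def TauStar {A : Type} : Wt (SCSP A) → Wt (SCSP A) → Prop :=
  Relation.ReflTransGen (Lift stepTauHat)

/-- `Δ ==â==> Θ` for a visible action `a`. -/
def WeakA {A : Type} (a : A) (Δ Θ : Wt (SCSP A)) : Prop :=
  ∃ Δ₁ Δ₂, TauStar Δ Δ₁ ∧ StepD (some a) Δ₁ Δ₂ ∧ TauStar Δ₂ Θ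

/-- `Δ ==α̂==> Θ`, which is `==τ̂==>` when `α = τ`. -/
def Weak {A : Type} : Option A → Wt (SCSP A) → Wt (SCSP A) → Prop
  | none => TauStar
  | some a => WeakA a

/-- `s ↛X` : the state `s` enables no action from `X ∪ {τ}`. -/
def SRefuses {A : Type} (s : SCSP A) (X : Set A) : Prop :=
  (∀ Δ, ¬ Step s none Δ) ∧ ∀ a ∈ X, ∀ Δ, ¬ Step s (some a) Δ

/-- `Δ ↛X` : every state in the support of `Δ` refuses `X`. -/
def DRefuses {A : Type} (Δ : Wt (SCSP A)) (X : Set A) : Prop :=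
  ∀ s ∈ dsupp Δ, SRefuses s X

/-! ### Simulation and failure simulation -/

/-- `R` is a simulation. -/
def IsSimulation {A : Type} (R : SCSP A → Wt (SCSP A) → Prop) : Prop :=
  ∀ s Θ α Δ, R s Θ → Step s α Δ → ∃ Θ', Weak α Θ Θ' ∧ Lift R Δ Θ'

/-- `R` is a failure simulation. -/
def IsFailureSim {A : Type} (R : SCSP A → Wt (SCSP A) → Prop) : Prop :=
  IsSimulation R ∧
  ∀ s Θ (X : Set A), R s Θ → SRefuses s X → ∃ Θ', TauStar Θ Θ' ∧ DRefuses Θ' X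

/-- `s ⊲_S Θ`. -/
def simLE {A : Type} (s : SCSP A) (Θ : Wt (SCSP A)) : Prop :=
  ∃ R, IsSimulation R ∧ R s Θ

/-- `s ⊲_FS Θ`. -/
def fsimLE {A : Type} (s : SCSP A) (Θ : Wt (SCSP A)) : Prop :=
  ∃ R, IsFailureSim R ∧ R s Θ

/-- The simulation preorder `P ⊑_S Q`. -/
def SimPre {A : Type} (P Q : PCSP A) : Prop :=
  ∃ Θ, TauStar Q.interp Θ ∧ Lift simLE P.interp Θ

/-- The failure simulation preorder `P ⊑_FS Q`. -/
def FSimPre {A : Type} (P Q : PCSP A) : Prop :=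
  ∃ Θ, TauStar P.interp Θ ∧ Lift fsimLE Q.interp Θ
/-! ### Syntactic operations: renaming, and ◻ / ∥ distributed over probabilistic choice -/

mutual
/-- Renaming of actions in a process term. -/
def mapP {A B : Type} (f : A → B) : PCSP A → PCSP B
  | .st s => .st (mapS f s)
  | .pch p P Q => .pch p (mapP f P) (mapP f Q)
def mapS {A B : Type} (f : A → B) : SCSP A → SCSP B
  | .nil => .nil
  | .pre a P => .pre (f a) (mapP f P)
  | .ich P Q => .ich (mapP f P) (mapP f Q)
  | .ech s t => .ech (mapS f s) (mapS f t)
  | .par X s t => .par (f '' X) (mapS f s) (mapS f t)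
end

/-- `s ∥_B Q` for a state `s`, distributing over probabilistic choice. -/
def parCS {A : Type} (B : Set A) (s : SCSP A) : PCSP A → PCSP A
  | .st t => .st (.par B s t)
  | .pch p Q₁ Q₂ => .pch p (parCS B s Q₁) (parCS B s Q₂)

/-- `P ∥_B Q` on processes, distributing over probabilistic choice. -/
def parC {A : Type} (B : Set A) : PCSP A → PCSP A → PCSP A
  | .st s, Q => parCS B s Q
  | .pch p P₁ P₂, Q => .pch p (parC B P₁ Q) (parC B P₂ Q)

/-- `s ◻ Q` for a state `s`, distributing over probabilistic choice. -/
def echCS {A : Type} (s : SCSP A) : PCSP A → PCSP A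
  | .st t => .st (.ech s t)
  | .pch p Q₁ Q₂ => .pch p (echCS s Q₁) (echCS s Q₂)

/-- `P ◻ Q` on processes, distributing over probabilistic choice. -/
def echC {A : Type} : PCSP A → PCSP A → PCSP A
  | .st s, Q => echCS s Q
  | .pch p P₁ P₂, Q => .pch p (echC P₁ Q) (echC P₂ Q)

/-- Finite (nonempty) indexed internal choice `⨅_{i} P i`. -/
def ichFin {A : Type} : (n : ℕ) → (Fin (n+1) → PCSP A) → PCSP A
  | 0, P => P 0
  | n+1, P => .st (.ich (P 0) (ichFin n (fun i => P i.succ)))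

/-- Finite (nonempty) indexed probabilistic choice `⊕_{i} p i · P i`. -/
def pchFin {A : Type} : (n : ℕ) → (Fin (n+1) → ℝ) → (Fin (n+1) → PCSP A) → PCSP A
  | 0, _, P => P 0
  | n+1, p, P => .pch (p 0) (P 0)
      (pchFin n (fun i => p i.succ / (1 - p 0)) (fun i => P i.succ))

/-- Finite (nonempty) indexed external choice of states `◻_{i} s i`. -/
def echFin {A : Type} : (n : ℕ) → (Fin (n+1) → SCSP A) → SCSP A
  | 0, s => s 0
  | n+1, s => .ech (s 0) (echFin n (fun i => s i.succ))

/-- External choice of a list of states (empty list gives `0`). -/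
def echList {A : Type} : List (SCSP A) → SCSP A
  | [] => .nil
  | s :: l => .ech s (echList l)

/-! ### State-based scalar testing -/

/-- The alphabet `Act ∪ {ω}` for ordinary (scalar) tests. -/
abbrev TAct (A : Type) := Sum A Unit

/-- The success action ω. -/
def omA {A : Type} : TAct A := Sum.inr ()

/-- Membership in the state-based results-gathering function `V` (with success action `w`). -/
inductive VMem {B : Type} (w : B) : SCSP B → ℝ → Prop where
  | succ {s : SCSP B} {Δ} : Step s (some w) Δ → VMem w s 1
  | step {s : SCSP B} {α : Option B} {Δ} (f : SCSP B → ℝ) :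
      (∀ Θ, ¬ Step s (some w) Θ) → Step s α Δ →
      (∀ t ∈ dsupp Δ, VMem w t (f t)) → VMem w s (dexp Δ f)
  | stuck {s : SCSP B} : (∀ α Δ, ¬ Step s α Δ) → VMem w s 0

/-- `V(Δ)` : the set of outcomes of a distribution, via choice functions. -/
def VD {B : Type} (w : B) (Δ : Wt (SCSP B)) : Set ℝ :=
  {r | ∃ f : SCSP B → ℝ, (∀ t ∈ dsupp Δ, VMem w t (f t)) ∧ r = dexp Δ f}

/-- The application `T ∥_Act P` of a test to a process. -/
def applyTest {A : Type} (T : PCSP (TAct A)) (P : PCSP A) : PCSP (TAct A) :=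
  parC (Set.range Sum.inl) T (mapP Sum.inl P)

/-- `A(T,P)` : state-based testing outcomes. -/
def Aset {A : Type} (T : PCSP (TAct A)) (P : PCSP A) : Set ℝ :=
  VD omA (applyTest T P).interp

/-- The Hoare preorder on sets of reals. -/
def HoareLE (X Y : Set ℝ) : Prop := ∀ x ∈ X, ∃ y ∈ Y, x ≤ y

/-- The Smyth preorder on sets of reals. -/
def SmythLE (X Y : Set ℝ) : Prop := ∀ y ∈ Y, ∃ x ∈ X, x ≤ y

/-- The may-testing preorder `⊑_pmay`. -/
def PMay {A : Type} (P Q : PCSP A) : Prop :=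
  ∀ T : PCSP (TAct A), PWF T → HoareLE (Aset T P) (Aset T Q)

/-- The must-testing preorder `⊑_pmust`. -/
def PMust {A : Type} (P Q : PCSP A) : Prop :=
  ∀ T : PCSP (TAct A), PWF T → SmythLE (Aset T P) (Aset T Q)

/-! ### Action-based scalar testing -/

/-- Membership in the action-based results-gathering function `V̄`. -/
inductive VBarMem {B : Type} (w : B) : SCSP B → ℝ → Prop where
  | succ {s : SCSP B} {Δ} : Step s (some w) Δ → VBarMem w s 1
  | step {s : SCSP B} {α : Option B} {Δ} (f : SCSP B → ℝ) :
      α ≠ some w → Step s α Δ →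
      (∀ t ∈ dsupp Δ, VBarMem w t (f t)) → VBarMem w s (dexp Δ f)
  | stuck {s : SCSP B} : (∀ α Δ, ¬ Step s α Δ) → VBarMem w s 0

/-- `V̄(Δ)`. -/
def VBarD {B : Type} (w : B) (Δ : Wt (SCSP B)) : Set ℝ :=
  {r | ∃ f : SCSP B → ℝ, (∀ t ∈ dsupp Δ, VBarMem w t (f t)) ∧ r = dexp Δ f}

/-- `Ā(T,P)` : action-based testing outcomes. -/
def AsetBar {A : Type} (T : PCSP (TAct A)) (P : PCSP A) : Set ℝ :=
  VBarD omA (applyTest T P).interp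

/-- The action-based may-testing preorder `⊑̄_pmay`. -/
def PMayBar {A : Type} (P Q : PCSP A) : Prop :=
  ∀ T : PCSP (TAct A), PWF T → HoareLE (AsetBar T P) (AsetBar T Q)

/-- The action-based must-testing preorder `⊑̄_pmust`. -/
def PMustBar {A : Type} (P Q : PCSP A) : Prop :=
  ∀ T : PCSP (TAct A), PWF T → SmythLE (AsetBar T P) (AsetBar T Q)
/-! ### ω-avoiding transitions and the relation ⊲ᵉ_FS -/

/-- `s --α-->_ω Δ` : a transition from a state not enabling the success action `w`. -/
def StepOmega {B : Type} (w : B) (s : SCSP B) (α : Option B) (Δ : Wt (SCSP B)) : Prop :=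
  (∀ Θ, ¬ Step s (some w) Θ) ∧ Step s α Δ

/-- `s --τ̂-->_ω Δ`. -/
def stepTauHatOm {B : Type} (w : B) (s : SCSP B) (Δ : Wt (SCSP B)) : Prop :=
  StepOmega w s none Δ ∨ Δ = dirac s

/-- `==τ̂==>_ω`. -/
def TauStarOm {B : Type} (w : B) : Wt (SCSP B) → Wt (SCSP B) → Prop :=
  Relation.ReflTransGen (Lift (stepTauHatOm w))

/-- `==â==>_ω` for a visible action `a`. -/
def WeakAOm {B : Type} (w : B) (a : B) (Δ Θ : Wt (SCSP B)) : Prop :=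
  ∃ Δ₁ Δ₂, TauStarOm w Δ Δ₁ ∧
    Lift (fun s Φ => StepOmega w s (some a) Φ) Δ₁ Δ₂ ∧ TauStarOm w Δ₂ Θ

/-- `==α̂==>_ω`. -/
def WeakOm {B : Type} (w : B) : Option B → Wt (SCSP B) → Wt (SCSP B) → Prop
  | none => TauStarOm w
  | some a => WeakAOm w a

/-- A postfixed point for the coinductive definition of `⊲ᵉ_FS`. -/
def IsEFailSim {B : Type} (w : B) (R : SCSP B → Wt (SCSP B) → Prop) : Prop :=
  (∀ s Θ α Δ, R s Θ → StepOmega w s α Δ → ∃ Θ', WeakOm w α Θ Θ' ∧ Lift R Δ Θ') ∧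
  (∀ s Θ (X : Set B), R s Θ → w ∈ X → SRefuses s X →
    ∃ Θ', TauStarOm w Θ Θ' ∧ DRefuses Θ' X)

/-- `s ⊲ᵉ_FS Θ` : the largest relation satisfying the transfer properties. -/
def efsimLE {B : Type} (w : B) (s : SCSP B) (Θ : Wt (SCSP B)) : Prop :=
  ∃ R, IsEFailSim w R ∧ R s Θ

/-! ### Vector-based testing with success actions from Ω -/

/-- `α!o` : update the `α`-component of the outcome tuple to 1 if `α` is a success action. -/
def bang {A Om : Type} (α : Option (Sum A Om)) (o : Om → ℝ) : Om → ℝ :=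
  fun w => if α = some (Sum.inr w) then 1 else o w

mutual
/-- Membership in the vector-based convex-closed results-gathering function `V̄↕^Ω`
for states.  -/
inductive WMem : {A Om : Type} → SCSP (Sum A Om) → (Om → ℝ) → Prop where
  | stuck {A Om : Type} {s : SCSP (Sum A Om)} :
      (∀ α Δ, ¬ Step s α Δ) → WMem s (fun _ => 0)
  | step {A Om : Type} {s : SCSP (Sum A Om)} {n : ℕ}
      (p : Fin (n+1) → ℝ) (α : Fin (n+1) → Option (Sum A Om))
      (Δ : Fin (n+1) → Wt (SCSP (Sum A Om))) (o : Fin (n+1) → Om → ℝ) :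
      (∀ i, 0 ≤ p i) → (∑ i, p i = 1) →
      (∀ i, Step s (α i) (Δ i)) →
      (∀ i, WMemD (Δ i) (o i)) →
      WMem s (fun w => ∑ i, p i * bang (α i) (o i) w)
/-- Membership in `V̄↕^Ω` for distributions. -/
inductive WMemD : {A Om : Type} → Wt (SCSP (Sum A Om)) → (Om → ℝ) → Prop where
  | mk {A Om : Type} {Δ : Wt (SCSP (Sum A Om))} (f : SCSP (Sum A Om) → Om → ℝ) :
      (∀ t ∈ dsupp Δ, WMem t (f t)) → WMemD Δ (fun w => ∑ᶠ t, Δ t * f t w)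
end

/-- `V̄↕^Ω(Δ)` as a set of outcome tuples. -/
def WsetD {A Om : Type} (Δ : Wt (SCSP (Sum A Om))) : Set (Om → ℝ) :=
  {o | WMemD Δ o}

/-- The application `T ∥_Act P` of an Ω-test to a process. -/
def applyTestO {A Om : Type} (T : PCSP (Sum A Om)) (P : PCSP A) : PCSP (Sum A Om) :=
  parC (Set.range Sum.inl) T (mapP Sum.inl P)

/-- `A↕^Ω(T,P)` : vector-based testing outcomes of a process. -/
def AO {A Om : Type} (T : PCSP (Sum A Om)) (P : PCSP A) : Set (Om → ℝ) :=
  WsetD (applyTestO T P).interp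

/-- `A↕^Ω(T,Δ)` for a distribution `Δ ∈ D(sCSP)`, via expected values. -/
def AOD {A Om : Type} (T : PCSP (Sum A Om)) (Δ : Wt (SCSP A)) : Set (Om → ℝ) :=
  {o | ∃ g : SCSP A → Om → ℝ,
    (∀ s ∈ dsupp Δ, g s ∈ AO T (.st s)) ∧ o = fun w => ∑ᶠ s, Δ s * g s w}

/-- Hoare preorder on sets of outcome tuples (componentwise order). -/
def HoareLEV {Om : Type} (X Y : Set (Om → ℝ)) : Prop := ∀ x ∈ X, ∃ y ∈ Y, x ≤ y

/-- Smyth preorder on sets of outcome tuples (componentwise order). -/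
def SmythLEV {Om : Type} (X Y : Set (Om → ℝ)) : Prop := ∀ y ∈ Y, ∃ x ∈ X, x ≤ y

/-- The vector-based may-testing preorder `⊑̄^Ω_pmay`. -/
def PMayO {A : Type} (Om : Type) (P Q : PCSP A) : Prop :=
  ∀ T : PCSP (Sum A Om), PWF T → HoareLEV (AO T P) (AO T Q)

/-- The vector-based must-testing preorder `⊑̄^Ω_pmust`. -/
def PMustO {A : Type} (Om : Type) (P Q : PCSP A) : Prop :=
  ∀ T : PCSP (Sum A Om), PWF T → SmythLEV (AO T P) (AO T Q)

/-- The unit outcome vector `ω⃗`. -/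
def unitVec {Om : Type} (w : Om) : Om → ℝ := fun w' => if w' = w then 1 else 0

/-! Occurrence of an action in a process term. -/
mutual
/-- Occurrence of an action in a process term. -/
inductive PUses : {B : Type} → B → PCSP B → Prop where
  | st {B : Type} {b : B} {s} : SUses b s → PUses b (.st s)
  | pchL {B : Type} {b : B} {p P Q} : PUses b P → PUses b (.pch p P Q)
  | pchR {B : Type} {b : B} {p P Q} : PUses b Q → PUses b (.pch p P Q)
inductive SUses : {B : Type} → B → SCSP B → Prop where
  | preAct {B : Type} {b : B} {P} : SUses b (.pre b P)
  | pre {B : Type} {b : B} {a P} : PUses b P → SUses b (.pre a P)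
  | ichL {B : Type} {b : B} {P Q} : PUses b P → SUses b (.ich P Q)
  | ichR {B : Type} {b : B} {P Q} : PUses b Q → SUses b (.ich P Q)
  | echL {B : Type} {b : B} {s t} : SUses b s → SUses b (.ech s t)
  | echR {B : Type} {b : B} {s t} : SUses b t → SUses b (.ech s t)
  | parSet {B : Type} {b : B} {X s t} : b ∈ X → SUses b (.par X s t)
  | parL {B : Type} {b : B} {X s t} : SUses b s → SUses b (.par X s t)
  | parR {B : Type} {b : B} {X s t} : SUses b t → SUses b (.par X s t)
end
/-! ### The modal logic F -/

/-- Modal formulae of the logic `F`. -/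
inductive Form (A : Type) : Type where
  | ref : Set A → Form A
  | dia : A → Form A → Form A
  | conj : (n : ℕ) → (Fin n → Form A) → Form A
  | prob : (n : ℕ) → (Fin n → ℝ) → (Fin n → Form A) → Form A

/-- Well-formed formulae: probabilistic choices carry genuine distributions. -/
inductive WFF {A : Type} : Form A → Prop where
  | ref {X} : WFF (.ref X)
  | dia {a φ} : WFF φ → WFF (.dia a φ)
  | conj {n φs} : (∀ i, WFF (φs i)) → WFF (.conj n φs)
  | prob {n p φs} : (∀ i, 0 ≤ p i) → (∑ i, p i = 1) →
      (∀ i, WFF (φs i)) → WFF (.prob n p φs)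

/-- Formulae of the sublogic `L`: no refusal construct. -/
inductive NoRef {A : Type} : Form A → Prop where
  | dia {a φ} : NoRef φ → NoRef (.dia a φ)
  | conj {n φs} : (∀ i, NoRef (φs i)) → NoRef (.conj n φs)
  | prob {n p φs} : (∀ i, NoRef (φs i)) → NoRef (.prob n p φs)

/-- The satisfaction relation `Δ ⊨ φ`. -/
inductive Sat {A : Type} : Form A → Wt (SCSP A) → Prop where
  | ref {X : Set A} {Δ Δ'} : TauStar Δ Δ' → DRefuses Δ' X → Sat (.ref X) Δ
  | dia {a φ Δ Δ'} : WeakA a Δ Δ' → Sat φ Δ' → Sat (.dia a φ) Δ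
  | conj {n φs Δ} : (∀ i, Sat (φs i) Δ) → Sat (.conj n φs) Δ
  | prob {n} {p : Fin n → ℝ} {φs Δ} (Δs : Fin n → Wt (SCSP A)) :
      (∀ i, Sat (φs i) (Δs i)) →
      TauStar Δ (fun t => ∑ i, p i * Δs i t) →
      Sat (.prob n p φs) Δ

/-- The logical preorder `⊑^L`. -/
def LPre {A : Type} (P Q : PCSP A) : Prop :=
  ∀ φ : Form A, WFF φ → NoRef φ → Sat φ P.interp → Sat φ Q.interp

/-- The logical preorder `⊑^F`. -/
def FPre {A : Type} (P Q : PCSP A) : Prop :=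
  ∀ φ : Form A, WFF φ → Sat φ Q.interp → Sat φ P.interp

mutual
/-- `CharS s φ` : `φ` is an F-characteristic formula `φ_s` of the state `s`. -/
inductive CharS : {A : Type} → SCSP A → Form A → Prop where
  | noTau {A : Type} {s : SCSP A} (n : ℕ) (a : Fin n → A)
      (Δ : Fin n → Wt (SCSP A)) (φ : Fin n → Form A) :
      (∀ Θ, ¬ Step s none Θ) →
      (∀ i, Step s (some (a i)) (Δ i)) →
      (∀ b Θ, Step s (some b) Θ → ∃ i, a i = b ∧ Δ i = Θ) →
      (∀ i, CharD (Δ i) (φ i)) →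
      CharS s (.conj (n+1) (Fin.snoc (fun i => .dia (a i) (φ i))
        (.ref {b : A | ∀ Θ, ¬ Step s (some b) Θ})))
  | tau {A : Type} {s : SCSP A} (n m : ℕ) (a : Fin n → A)
      (Δ : Fin n → Wt (SCSP A)) (φ : Fin n → Form A)
      (Θs : Fin m → Wt (SCSP A)) (ψ : Fin m → Form A) :
      (∃ Θ, Step s none Θ) →
      (∀ i, Step s (some (a i)) (Δ i)) →
      (∀ b Θ, Step s (some b) Θ → ∃ i, a i = b ∧ Δ i = Θ) →
      (∀ j, Step s none (Θs j)) →
      (∀ Θ, Step s none Θ → ∃ j, Θs j = Θ) →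
      (∀ i, CharD (Δ i) (φ i)) →
      (∀ j, CharD (Θs j) (ψ j)) →
      CharS s (.conj (n+m) (Fin.append (fun i => .dia (a i) (φ i)) ψ))
/-- `CharD Δ φ` : `φ` is an F-characteristic formula `φ_Δ` of the distribution `Δ`. -/
inductive CharD : {A : Type} → Wt (SCSP A) → Form A → Prop where
  | mk {A : Type} {Δ : Wt (SCSP A)} (n : ℕ) (s : Fin n → SCSP A) (φ : Fin n → Form A) :
      Function.Injective s →
      (∀ i, s i ∈ dsupp Δ) →
      (∀ t ∈ dsupp Δ, ∃ i, s i = t) →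
      (∀ i, CharS (s i) (φ i)) →
      CharD Δ (.prob n (fun i => Δ (s i)) φ)
end

mutual
/-- `CharSL s ψ` : `ψ` is an L-characteristic formula `ψ_s` of the state `s`. -/
inductive CharSL : {A : Type} → SCSP A → Form A → Prop where
  | noTau {A : Type} {s : SCSP A} (n : ℕ) (a : Fin n → A)
      (Δ : Fin n → Wt (SCSP A)) (φ : Fin n → Form A) :
      (∀ Θ, ¬ Step s none Θ) →
      (∀ i, Step s (some (a i)) (Δ i)) →
      (∀ b Θ, Step s (some b) Θ → ∃ i, a i = b ∧ Δ i = Θ) →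
      (∀ i, CharDL (Δ i) (φ i)) →
      CharSL s (.conj n (fun i => .dia (a i) (φ i)))
  | tau {A : Type} {s : SCSP A} (n m : ℕ) (a : Fin n → A)
      (Δ : Fin n → Wt (SCSP A)) (φ : Fin n → Form A)
      (Θs : Fin m → Wt (SCSP A)) (ψ : Fin m → Form A) :
      (∃ Θ, Step s none Θ) →
      (∀ i, Step s (some (a i)) (Δ i)) →
      (∀ b Θ, Step s (some b) Θ → ∃ i, a i = b ∧ Δ i = Θ) →
      (∀ j, Step s none (Θs j)) →
      (∀ Θ, Step s none Θ → ∃ j, Θs j = Θ) →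
      (∀ i, CharDL (Δ i) (φ i)) →
      (∀ j, CharDL (Θs j) (ψ j)) →
      CharSL s (.conj (n+m) (Fin.append (fun i => .dia (a i) (φ i)) ψ))
/-- `CharDL Δ ψ` : `ψ` is an L-characteristic formula `ψ_Δ` of the distribution `Δ`. -/
inductive CharDL : {A : Type} → Wt (SCSP A) → Form A → Prop where
  | mk {A : Type} {Δ : Wt (SCSP A)} (n : ℕ) (s : Fin n → SCSP A) (φ : Fin n → Form A) :
      Function.Injective s →
      (∀ i, s i ∈ dsupp Δ) →
      (∀ t ∈ dsupp Δ, ∃ i, s i = t) →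
      (∀ i, CharSL (s i) (φ i)) →
      CharDL Δ (.prob n (fun i => Δ (s i)) φ)
end
/-! ### The sub-language nCSP and (in)equational theories -/

mutual
/-- Membership in `nCSP`: no parallel composition. -/
inductive PNoPar : {A : Type} → PCSP A → Prop where
  | st {A : Type} {s : SCSP A} : SNoPar s → PNoPar (.st s)
  | pch {A : Type} {p : ℝ} {P Q : PCSP A} : PNoPar P → PNoPar Q → PNoPar (.pch p P Q)
inductive SNoPar : {A : Type} → SCSP A → Prop where
  | nil {A : Type} : SNoPar (SCSP.nil (A := A))
  | pre {A : Type} {a : A} {P} : PNoPar P → SNoPar (.pre a P)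
  | ich {A : Type} {P Q : PCSP A} : PNoPar P → PNoPar Q → SNoPar (.ich P Q)
  | ech {A : Type} {s t : SCSP A} : SNoPar s → SNoPar t → SNoPar (.ech s t)
end

/-- Initial actions of a state-based term (`none` denotes τ). -/
def initsS {A : Type} : SCSP A → Set (Option A)
  | .nil => ∅
  | .pre a _ => {some a}
  | .ich _ _ => {none}
  | .ech s t => initsS s ∪ initsS t
  | .par _ s t => initsS s ∪ initsS t

/-- Initial actions of a process term. -/
def initsP {A : Type} : PCSP A → Set (Option A)
  | .st s => initsS s
  | .pch _ P Q => initsP P ∪ initsP Q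

/-- Derivability in the equational theory `=_E` of Figure 3. -/
inductive EqE {A : Type} : PCSP A → PCSP A → Prop where
  | refl (P) : EqE P P
  | symm {P Q} : EqE P Q → EqE Q P
  | trans {P Q R} : EqE P Q → EqE Q R → EqE P R
  | congPre (a : A) {P Q} : EqE P Q → EqE (.st (.pre a P)) (.st (.pre a Q))
  | congIch {P₁ P₂ Q₁ Q₂} : EqE P₁ Q₁ → EqE P₂ Q₂ →
      EqE (.st (.ich P₁ P₂)) (.st (.ich Q₁ Q₂))
  | congEch {P₁ P₂ Q₁ Q₂} : EqE P₁ Q₁ → EqE P₂ Q₂ →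
      EqE (echC P₁ P₂) (echC Q₁ Q₂)
  | congPch (p : ℝ) {P₁ P₂ Q₁ Q₂} : EqE P₁ Q₁ → EqE P₂ Q₂ →
      EqE (.pch p P₁ P₂) (.pch p Q₁ Q₂)
  | P1 (p : ℝ) (h₀ : 0 < p) (h₁ : p < 1) (P) : EqE (.pch p P P) P
  | P2 (p : ℝ) (h₀ : 0 < p) (h₁ : p < 1) (P Q) :
      EqE (.pch p P Q) (.pch (1-p) Q P)
  | P3 (p q : ℝ) (hp₀ : 0 < p) (hp₁ : p < 1) (hq₀ : 0 < q) (hq₁ : q < 1) (P Q R) :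
      EqE (.pch q (.pch p P Q) R)
          (.pch (p*q) P (.pch ((1-p)*q/(1-p*q)) Q R))
  | I1 (P) : EqE (.st (.ich P P)) P
  | I2 (P Q) : EqE (.st (.ich P Q)) (.st (.ich Q P))
  | I3 (P Q R) : EqE (.st (.ich (.st (.ich P Q)) R)) (.st (.ich P (.st (.ich Q R))))
  | E1 (P) : EqE (echC P (.st .nil)) P
  | E2 (P Q) : EqE (echC P Q) (echC Q P)
  | E3 (P Q R) : EqE (echC (echC P Q) R) (echC P (echC Q R))
  | EI (a : A) (P Q) :
      EqE (echC (.st (.pre a P)) (.st (.pre a Q)))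
          (.st (.ich (.st (.pre a P)) (.st (.pre a Q))))
  | D1 (p : ℝ) (h₀ : 0 < p) (h₁ : p < 1) (P Q R) :
      EqE (echC P (.pch p Q R)) (.pch p (echC P Q) (echC P R))
  | D2 (a : A) (P Q R) :
      EqE (echC (.st (.pre a P)) (.st (.ich Q R)))
          (.st (.ich (echC (.st (.pre a P)) Q) (echC (.st (.pre a P)) R)))
  | D3 (P₁ P₂ Q₁ Q₂) :
      EqE (echC (.st (.ich P₁ P₂)) (.st (.ich Q₁ Q₂)))
          (.st (.ich
            (.st (.ich (echC P₁ (.st (.ich Q₁ Q₂))) (echC P₂ (.st (.ich Q₁ Q₂)))))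
            (.st (.ich (echC (.st (.ich P₁ P₂)) Q₁) (echC (.st (.ich P₁ P₂)) Q₂)))))

/-- Derivability from the probabilistic axioms P1–P3 and D1 only (`=_prob`). -/
inductive EqProb {A : Type} : PCSP A → PCSP A → Prop where
  | refl (P) : EqProb P P
  | symm {P Q} : EqProb P Q → EqProb Q P
  | trans {P Q R} : EqProb P Q → EqProb Q R → EqProb P R
  | congPre (a : A) {P Q} : EqProb P Q → EqProb (.st (.pre a P)) (.st (.pre a Q))
  | congIch {P₁ P₂ Q₁ Q₂} : EqProb P₁ Q₁ → EqProb P₂ Q₂ →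
      EqProb (.st (.ich P₁ P₂)) (.st (.ich Q₁ Q₂))
  | congEch {P₁ P₂ Q₁ Q₂} : EqProb P₁ Q₁ → EqProb P₂ Q₂ →
      EqProb (echC P₁ P₂) (echC Q₁ Q₂)
  | congPch (p : ℝ) {P₁ P₂ Q₁ Q₂} : EqProb P₁ Q₁ → EqProb P₂ Q₂ →
      EqProb (.pch p P₁ P₂) (.pch p Q₁ Q₂)
  | P1 (p : ℝ) (h₀ : 0 < p) (h₁ : p < 1) (P) : EqProb (.pch p P P) P
  | P2 (p : ℝ) (h₀ : 0 < p) (h₁ : p < 1) (P Q) :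
      EqProb (.pch p P Q) (.pch (1-p) Q P)
  | P3 (p q : ℝ) (hp₀ : 0 < p) (hp₁ : p < 1) (hq₀ : 0 < q) (hq₁ : q < 1) (P Q R) :
      EqProb (.pch q (.pch p P Q) R)
          (.pch (p*q) P (.pch ((1-p)*q/(1-p*q)) Q R))
  | D1 (p : ℝ) (h₀ : 0 < p) (h₁ : p < 1) (P Q R) :
      EqProb (echC P (.pch p Q R)) (.pch p (echC P Q) (echC P R))

mutual
/-- Normal forms. -/
inductive IsNF : {A : Type} → PCSP A → Prop where
  | pch {A : Type} {p : ℝ} {N₁ N₂ : PCSP A} : 0 < p → p < 1 →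
      IsNF N₁ → IsNF N₂ → IsNF (.pch p N₁ N₂)
  | ich {A : Type} {N₁ N₂ : PCSP A} : IsNF N₁ → IsNF N₂ → IsNF (.st (.ich N₁ N₂))
  | ext {A : Type} {s : SCSP A} : IsExtNF s → IsNF (.st s)
/-- External-choice normal forms `◻_{i∈I} a_i.N_i`. -/
inductive IsExtNF : {A : Type} → SCSP A → Prop where
  | nil {A : Type} : IsExtNF (SCSP.nil (A := A))
  | pre {A : Type} {a : A} {N} : IsNF N → IsExtNF (.pre a N)
  | ech {A : Type} {s t : SCSP A} : IsExtNF s → IsExtNF t → IsExtNF (.ech s t)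
end

/-- Derivability in the inequational theory for may testing (`⊑_Emay`). -/
inductive LeMay {A : Type} : PCSP A → PCSP A → Prop where
  | ofEq {P Q} : EqE P Q → LeMay P Q
  | trans {P Q R} : LeMay P Q → LeMay Q R → LeMay P R
  | congPre (a : A) {P Q} : LeMay P Q → LeMay (.st (.pre a P)) (.st (.pre a Q))
  | congIch {P₁ P₂ Q₁ Q₂} : LeMay P₁ Q₁ → LeMay P₂ Q₂ →
      LeMay (.st (.ich P₁ P₂)) (.st (.ich Q₁ Q₂))
  | congEch {P₁ P₂ Q₁ Q₂} : LeMay P₁ Q₁ → LeMay P₂ Q₂ →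
      LeMay (echC P₁ P₂) (echC Q₁ Q₂)
  | congPch (p : ℝ) {P₁ P₂ Q₁ Q₂} : LeMay P₁ Q₁ → LeMay P₂ Q₂ →
      LeMay (.pch p P₁ P₂) (.pch p Q₁ Q₂)
  | may0 (a b : A) (P Q) :
      LeMay (echC (.st (.pre a P)) (.st (.pre b Q)))
            (.st (.ich (.st (.pre a P)) (.st (.pre b Q))))
  | may0' (a b : A) (P Q) :
      LeMay (.st (.ich (.st (.pre a P)) (.st (.pre b Q))))
            (echC (.st (.pre a P)) (.st (.pre b Q)))
  | may1 (P Q) : LeMay P (.st (.ich P Q))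
  | may2 (P) : LeMay (.st .nil) P
  | may3 (a : A) (p : ℝ) (h₀ : 0 < p) (h₁ : p < 1) (P Q) :
      LeMay (.st (.pre a (.pch p P Q))) (.pch p (.st (.pre a P)) (.st (.pre a Q)))

/-- Derivability in the inequational theory for must testing (`⊑_Emust`). -/
inductive LeMust {A : Type} : PCSP A → PCSP A → Prop where
  | ofEq {P Q} : EqE P Q → LeMust P Q
  | trans {P Q R} : LeMust P Q → LeMust Q R → LeMust P R
  | congPre (a : A) {P Q} : LeMust P Q → LeMust (.st (.pre a P)) (.st (.pre a Q))
  | congIch {P₁ P₂ Q₁ Q₂} : LeMust P₁ Q₁ → LeMust P₂ Q₂ →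
      LeMust (.st (.ich P₁ P₂)) (.st (.ich Q₁ Q₂))
  | congEch {P₁ P₂ Q₁ Q₂} : LeMust P₁ Q₁ → LeMust P₂ Q₂ →
      LeMust (echC P₁ P₂) (echC Q₁ Q₂)
  | congPch (p : ℝ) {P₁ P₂ Q₁ Q₂} : LeMust P₁ Q₁ → LeMust P₂ Q₂ →
      LeMust (.pch p P₁ P₂) (.pch p Q₁ Q₂)
  | must1 (P Q) : LeMust (.st (.ich P Q)) Q
  | must2 (n : ℕ) (a : Fin (n+1) → A) (m : Fin (n+1) → ℕ)
      (p : (i : Fin (n+1)) → Fin (m i + 1) → ℝ)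
      (Q : (i : Fin (n+1)) → Fin (m i + 1) → PCSP A)
      (P : (i : Fin (n+1)) → Fin (m i + 1) → PCSP A)
      (R : PCSP A) :
      (∀ i j, 0 ≤ p i j) → (∀ i, ∑ j, p i j = 1) →
      initsP R ⊆ {α | ∃ i, α = some (a i)} →
      LeMust
        (.st (.ich R (ichFin n (fun i =>
          pchFin (m i) (p i) (fun j => echC (.st (.pre (a i) (Q i j))) (P i j))))))
        (.st (echFin n (fun i => .pre (a i) (pchFin (m i) (p i) (Q i)))))

/-! ### Auxiliary development for Proposition 5.1 -/

section AuxFinsum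

open scoped Classical

variable {X Y Z X' Y' : Type}

lemma dsupp_fs {Δ : Wt X} {s : Finset X} (h : dsupp Δ ⊆ ↑s) :
    Function.support Δ ⊆ ↑s := h

lemma fs_eq (Δ : Wt X) {s : Finset X} (h : dsupp Δ ⊆ ↑s) :
    ∑ᶠ x, Δ x = ∑ x ∈ s, Δ x :=
  finsum_eq_sum_of_support_subset _ h

lemma fsm_eq (Δ : Wt X) {s : Finset X} (h : dsupp Δ ⊆ ↑s) (p : X → Prop) :
    ∑ᶠ x ∈ {x | p x}, Δ x = ∑ x ∈ s.filter p, Δ x := by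
  rw [finsum_mem_def, finsum_eq_sum_of_support_subset (s := s) _ ?hsub]
  · rw [Finset.sum_filter]
    refine Finset.sum_congr rfl fun x _ => ?_
    by_cases hx : p x
    · simp [Set.indicator_apply, hx]
    · simp [Set.indicator_apply, hx]
  case hsub =>
    intro x hx
    apply h
    simp only [Function.mem_support] at hx ⊢
    intro h0
    exact hx (by simp [Set.indicator_apply, h0])

lemma dmap_apply (g : X → Y) (Δ : Wt X) {s : Finset X} (h : dsupp Δ ⊆ ↑s) (y : Y) :
    dmap g Δ y = ∑ x ∈ s.filter (fun x => g x = y), Δ x :=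
  fsm_eq Δ h _

lemma dsupp_dmap (g : X → Y) (Δ : Wt X) : dsupp (dmap g Δ) ⊆ g '' dsupp Δ := by
  intro y hy
  by_contra hne
  refine hy ?_
  have hz : ∀ x ∈ {x | g x = y}, Δ x = 0 := by
    intro x hx
    by_contra h0
    exact hne ⟨x, h0, hx⟩
  calc dmap g Δ y = ∑ᶠ x ∈ {x | g x = y}, Δ x := rfl
    _ = 0 := finsum_mem_of_eqOn_zero hz

lemma mem_dsupp_dmap {Δ : Wt X} (h : t ∈ dsupp (dmap g Δ)) :
    ∃ x ∈ dsupp Δ, g x = t := by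
  obtain ⟨x, hx, rfl⟩ := dsupp_dmap g Δ h
  exact ⟨x, hx, rfl⟩

lemma dmap_fin {Δ : Wt X} (h : (dsupp Δ).Finite) (g : X → Y) :
    (dsupp (dmap g Δ)).Finite :=
  (h.image g).subset (dsupp_dmap g Δ)

lemma dmap_nonneg {Δ : Wt X} (h : ∀ x, 0 ≤ Δ x) (g : X → Y) (y : Y) :
    0 ≤ dmap g Δ y := by
  rw [show dmap g Δ y = ∑ᶠ x ∈ {x | g x = y}, Δ x from rfl, finsum_mem_def]
  exact finsum_nonneg fun x => Set.indicator_nonneg (fun a _ => h a) x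

lemma dmap_mass (g : X → Y) {Δ : Wt X} (h : (dsupp Δ).Finite) :
    ∑ᶠ y, dmap g Δ y = ∑ᶠ x, Δ x := by
  classical
  set s := h.toFinset with hs
  have hsub : dsupp Δ ⊆ ↑s := by simp [hs]
  have hsub2 : dsupp (dmap g Δ) ⊆ ↑(s.image g) := by
    refine (dsupp_dmap g Δ).trans ?_
    rw [Finset.coe_image]
    exact Set.image_mono (f := g) hsub
  rw [fs_eq Δ hsub, fs_eq (dmap g Δ) hsub2]
  rw [Finset.sum_congr rfl (fun y _ => dmap_apply g Δ hsub y)]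
  exact Finset.sum_fiberwise_of_maps_to (fun x hx => Finset.mem_image_of_mem g hx) _

lemma dsupp_mul_fun (Δ : Wt X) (f : X → ℝ) :
    dsupp (fun x => Δ x * f x) ⊆ dsupp Δ := by
  intro x hx
  simp only [dsupp, Function.mem_support] at hx ⊢
  intro h0; exact hx (by rw [h0, zero_mul])

lemma dexp_eq (Δ : Wt X) (f : X → ℝ) {s : Finset X} (h : dsupp Δ ⊆ ↑s) :
    dexp Δ f = ∑ x ∈ s, Δ x * f x :=
  fs_eq _ ((dsupp_mul_fun Δ f).trans h)

lemma dexp_dmap (g : X → Y) {Δ : Wt X} (h : (dsupp Δ).Finite) (f : Y → ℝ) :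
    dexp (dmap g Δ) f = dexp Δ (fun x => f (g x)) := by
  classical
  set s := h.toFinset with hs
  have hsub : dsupp Δ ⊆ ↑s := by simp [hs]
  have hsub2 : dsupp (dmap g Δ) ⊆ ↑(s.image g) := by
    refine (dsupp_dmap g Δ).trans ?_
    rw [Finset.coe_image]; exact Set.image_mono (f := g) hsub
  rw [dexp_eq (dmap g Δ) f hsub2, dexp_eq Δ _ hsub]
  rw [← Finset.sum_fiberwise_of_maps_to (t := s.image g)
    (fun x hx => Finset.mem_image_of_mem g hx) (fun x => Δ x * f (g x))]
  refine Finset.sum_congr rfl fun y _ => ?_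
  rw [dmap_apply g Δ hsub y, Finset.sum_mul]
  refine Finset.sum_congr rfl fun x hx => ?_
  rw [(Finset.mem_filter.1 hx).2]

lemma dexp_mono {Δ : Wt X} (h : (dsupp Δ).Finite) (h0 : ∀ x, 0 ≤ Δ x)
    {f g : X → ℝ} (hfg : ∀ x ∈ dsupp Δ, f x ≤ g x) : dexp Δ f ≤ dexp Δ g := by
  have hsub : dsupp Δ ⊆ ↑h.toFinset := by simp
  rw [dexp_eq Δ f hsub, dexp_eq Δ g hsub]
  refine Finset.sum_le_sum fun x hx => ?_
  exact mul_le_mul_of_nonneg_left (hfg x (by simpa using hx)) (h0 x)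

lemma dexp_eq_mass_of {Δ : Wt X} {f : X → ℝ} (h : ∀ x ∈ dsupp Δ, f x = 1) :
    dexp Δ f = ∑ᶠ x, Δ x := by
  refine finsum_congr fun x => ?_
  by_cases hx : Δ x = 0
  · rw [hx, zero_mul]
  · rw [h x hx, mul_one]

lemma dmap_id_on {Δ : Wt X} {g : X → X} (h : ∀ x ∈ dsupp Δ, g x = x) :
    dmap g Δ = Δ := by
  funext y
  have key : dmap g Δ y = ∑ᶠ x ∈ ({x | g x = y} ∩ Function.support Δ), Δ x :=
    (finsum_mem_inter_support _ _).symm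
  by_cases hy : Δ y = 0
  · rw [key]
    have : ∀ x ∈ ({x | g x = y} ∩ Function.support Δ), Δ x = 0 := by
      rintro x ⟨hgx, hsx⟩
      simp only [Set.mem_setOf_eq] at hgx
      have hxy : x = y := by rw [← h x hsx]; exact hgx
      subst hxy
      exact absurd hy hsx
    rw [finsum_mem_of_eqOn_zero this, hy]
  · rw [key]
    have : ({x | g x = y} ∩ Function.support Δ) = {y} := by
      ext x
      simp only [Set.mem_inter_iff, Set.mem_setOf_eq, Set.mem_singleton_iff,
        Function.mem_support]
      constructor
      · rintro ⟨hgx, hsx⟩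
        rw [← h x hsx]; exact hgx
      · rintro rfl
        exact ⟨h _ hy, hy⟩
    rw [this, finsum_mem_singleton]

lemma dsupp_dirac (x : X) : dsupp (dirac x) = {x} := by
  ext y
  simp only [dsupp, Function.mem_support, dirac, Set.mem_singleton_iff]
  by_cases h : y = x <;> simp [h]

lemma dirac_mass (x : X) : ∑ᶠ y, dirac x y = 1 := by
  rw [finsum_eq_single _ x (fun y hy => by simp [dirac, hy])]
  simp [dirac]

lemma dmap_dirac (g : X → Y) (x : X) : dmap g (dirac x) = dirac (g x) := by
  classical
  funext y
  have hsub : dsupp (dirac x) ⊆ ↑({x} : Finset X) := by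
    rw [dsupp_dirac]; simp
  rw [dmap_apply g (dirac x) hsub y]
  by_cases hgx : g x = y
  · rw [Finset.filter_true_of_mem (by simpa using hgx)]
    simp [dirac, hgx.symm]
  · rw [Finset.filter_false_of_mem (by simpa using hgx)]
    have : y ≠ g x := fun hh => hgx hh.symm
    simp [dirac, this]

lemma dexp_dirac (x : X) (f : X → ℝ) : dexp (dirac x) f = f x := by
  rw [dexp, finsum_eq_single _ x (fun y hy => by simp [dirac, hy])]
  simp [dirac]

lemma dmap_dmap (g : Y → Z) (h : X → Y) {Δ : Wt X} (hΔ : (dsupp Δ).Finite) :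
    dmap g (dmap h Δ) = dmap (fun x => g (h x)) Δ := by
  classical
  funext z
  set s := hΔ.toFinset with hs
  have hsub : dsupp Δ ⊆ ↑s := by simp [hs]
  have hsub2 : dsupp (dmap h Δ) ⊆ ↑(s.image h) := by
    refine (dsupp_dmap h Δ).trans ?_
    rw [Finset.coe_image]; exact Set.image_mono (f := h) hsub
  rw [dmap_apply g (dmap h Δ) hsub2 z, dmap_apply (fun x => g (h x)) Δ hsub z]
  rw [Finset.sum_congr rfl (fun y _ => dmap_apply h Δ hsub y)]
  rw [← Finset.sum_fiberwise_of_maps_to (g := h)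
      (s := s.filter (fun x => g (h x) = z))
      (t := (s.image h).filter (fun y => g y = z))
      (fun x hx => by
        rw [Finset.mem_filter] at hx ⊢
        exact ⟨Finset.mem_image_of_mem h hx.1, hx.2⟩) Δ]
  refine Finset.sum_congr rfl fun y hy => ?_
  have hgy : g y = z := (Finset.mem_filter.1 hy).2
  refine Finset.sum_congr ?_ fun _ _ => rfl
  ext x
  constructor
  · intro hx
    have h1 := Finset.mem_filter.1 hx
    exact Finset.mem_filter.2 ⟨Finset.mem_filter.2 ⟨h1.1, by rw [h1.2, hgy]⟩, h1.2⟩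
  · intro hx
    have h1 := Finset.mem_filter.1 hx
    have h2 := Finset.mem_filter.1 h1.1
    exact Finset.mem_filter.2 ⟨h2.1, h1.2⟩

lemma dsupp_prod (Δ₁ : Wt X) (Δ₂ : Wt Y) :
    dsupp (fun q : X × Y => Δ₁ q.1 * Δ₂ q.2) ⊆ dsupp Δ₁ ×ˢ dsupp Δ₂ := by
  rintro ⟨x, y⟩ h
  simp only [dsupp, Function.mem_support] at h
  refine Set.mem_prod.2 ⟨?_, ?_⟩ <;>
    simp only [dsupp, Function.mem_support]
  · intro h0; exact h (by simp [h0])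
  · intro h0; exact h (by simp [h0])

lemma prod_fin {Δ₁ : Wt X} {Δ₂ : Wt Y} (h₁ : (dsupp Δ₁).Finite) (h₂ : (dsupp Δ₂).Finite) :
    (dsupp (fun q : X × Y => Δ₁ q.1 * Δ₂ q.2)).Finite :=
  (h₁.prod h₂).subset (dsupp_prod Δ₁ Δ₂)

lemma prod_mass {Δ₁ : Wt X} {Δ₂ : Wt Y} (h₁ : (dsupp Δ₁).Finite) (h₂ : (dsupp Δ₂).Finite) :
    ∑ᶠ q : X × Y, Δ₁ q.1 * Δ₂ q.2 = (∑ᶠ x, Δ₁ x) * ∑ᶠ y, Δ₂ y := by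
  classical
  have hsub1 : dsupp Δ₁ ⊆ ↑h₁.toFinset := by simp
  have hsub2 : dsupp Δ₂ ⊆ ↑h₂.toFinset := by simp
  have hsub : dsupp (fun q : X × Y => Δ₁ q.1 * Δ₂ q.2) ⊆ ↑(h₁.toFinset ×ˢ h₂.toFinset) := by
    refine (dsupp_prod Δ₁ Δ₂).trans ?_
    rw [Finset.coe_product]
    exact Set.prod_mono hsub1 hsub2
  rw [fs_eq _ hsub, fs_eq _ hsub1, fs_eq _ hsub2, Finset.sum_mul_sum, Finset.sum_product]

lemma prod_dmap (g₁ : X → X') (g₂ : Y → Y') {Δ₁ : Wt X} {Δ₂ : Wt Y}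
    (h₁ : (dsupp Δ₁).Finite) (h₂ : (dsupp Δ₂).Finite) :
    (fun q : X' × Y' => dmap g₁ Δ₁ q.1 * dmap g₂ Δ₂ q.2) =
      dmap (Prod.map g₁ g₂) (fun q : X × Y => Δ₁ q.1 * Δ₂ q.2) := by
  classical
  funext q
  obtain ⟨z₁, z₂⟩ := q
  have hsub1 : dsupp Δ₁ ⊆ ↑h₁.toFinset := by simp
  have hsub2 : dsupp Δ₂ ⊆ ↑h₂.toFinset := by simp
  have hsub : dsupp (fun q : X × Y => Δ₁ q.1 * Δ₂ q.2) ⊆ ↑(h₁.toFinset ×ˢ h₂.toFinset) := by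
    refine (dsupp_prod Δ₁ Δ₂).trans ?_
    rw [Finset.coe_product]
    exact Set.prod_mono hsub1 hsub2
  rw [dmap_apply (Prod.map g₁ g₂) _ hsub (z₁, z₂)]
  simp only
  rw [dmap_apply g₁ Δ₁ hsub1 z₁, dmap_apply g₂ Δ₂ hsub2 z₂, Finset.sum_mul_sum]
  rw [← Finset.sum_product' (f := fun x y => Δ₁ x * Δ₂ y)]
  refine (Finset.sum_congr ?_ fun _ _ => rfl).symm
  ext ⟨x, y⟩
  simp only [Finset.mem_filter, Finset.mem_product, Prod.map, Prod.ext_iff]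
  tauto

lemma dmap_convex (g : X → Y) (p q : ℝ) {Δ₁ Δ₂ : Wt X}
    (h₁ : (dsupp Δ₁).Finite) (h₂ : (dsupp Δ₂).Finite) :
    dmap g (fun x => p * Δ₁ x + q * Δ₂ x) =
      fun y => p * dmap g Δ₁ y + q * dmap g Δ₂ y := by
  classical
  funext y
  have hsub1 : dsupp Δ₁ ⊆ ↑(h₁.toFinset ∪ h₂.toFinset) := by
    intro x hx; simp [Finset.mem_union]; left; simpa using hx
  have hsub2 : dsupp Δ₂ ⊆ ↑(h₁.toFinset ∪ h₂.toFinset) := by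
    intro x hx; simp [Finset.mem_union]; right; simpa using hx
  have hsub : dsupp (fun x => p * Δ₁ x + q * Δ₂ x) ⊆ ↑(h₁.toFinset ∪ h₂.toFinset) := by
    intro x hx
    simp only [dsupp, Function.mem_support] at hx
    by_cases hx1 : Δ₁ x = 0
    · by_cases hx2 : Δ₂ x = 0
      · exact absurd (by rw [hx1, hx2]; ring) hx
      · exact hsub2 hx2
    · exact hsub1 hx1
  rw [dmap_apply g _ hsub y, dmap_apply g Δ₁ hsub1 y, dmap_apply g Δ₂ hsub2 y]
  rw [Finset.sum_add_distrib, Finset.mul_sum, Finset.mul_sum]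

lemma mass_convex (p q : ℝ) {Δ₁ Δ₂ : Wt X}
    (h₁ : (dsupp Δ₁).Finite) (h₂ : (dsupp Δ₂).Finite) :
    ∑ᶠ x, (p * Δ₁ x + q * Δ₂ x) = p * (∑ᶠ x, Δ₁ x) + q * ∑ᶠ x, Δ₂ x := by
  classical
  have hsub1 : dsupp Δ₁ ⊆ ↑(h₁.toFinset ∪ h₂.toFinset) := by
    intro x hx; simp [Finset.mem_union]; left; simpa using hx
  have hsub2 : dsupp Δ₂ ⊆ ↑(h₁.toFinset ∪ h₂.toFinset) := by
    intro x hx; simp [Finset.mem_union]; right; simpa using hx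
  have hsub : dsupp (fun x => p * Δ₁ x + q * Δ₂ x) ⊆ ↑(h₁.toFinset ∪ h₂.toFinset) := by
    intro x hx
    simp only [dsupp, Function.mem_support] at hx
    by_cases hx1 : Δ₁ x = 0
    · by_cases hx2 : Δ₂ x = 0
      · exact absurd (by rw [hx1, hx2]; ring) hx
      · exact hsub2 hx2
    · exact hsub1 hx1
  rw [fs_eq _ hsub, fs_eq _ hsub1, fs_eq _ hsub2,
    Finset.sum_add_distrib, Finset.mul_sum, Finset.mul_sum]

lemma dsupp_convex {p q : ℝ} {Δ₁ Δ₂ : Wt X} :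
    dsupp (fun x => p * Δ₁ x + q * Δ₂ x) ⊆ dsupp Δ₁ ∪ dsupp Δ₂ := by
  intro x hx
  simp only [dsupp, Function.mem_support] at hx
  by_cases hx1 : Δ₁ x = 0
  · by_cases hx2 : Δ₂ x = 0
    · exact absurd (by rw [hx1, hx2]; ring) hx
    · exact Or.inr hx2
  · exact Or.inl hx1

lemma mem_dsupp_dmap_of_mem {Δ : Wt X} (h0 : ∀ x, 0 ≤ Δ x) (hfin : (dsupp Δ).Finite)
    (g : X → Y) {t : X} (ht : t ∈ dsupp Δ) : g t ∈ dsupp (dmap g Δ) := by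
  classical
  have hsub : dsupp Δ ⊆ ↑hfin.toFinset := by simp
  have key := dmap_apply g Δ hsub (g t)
  have hmem : t ∈ hfin.toFinset.filter (fun x => g x = g t) :=
    Finset.mem_filter.2 ⟨by simpa using ht, rfl⟩
  have hle : Δ t ≤ dmap g Δ (g t) := by
    rw [key]
    exact Finset.single_le_sum (fun x _ => h0 x) hmem
  have hpos : 0 < Δ t := lt_of_le_of_ne (h0 t) (Ne.symm ht)
  exact ne_of_gt (lt_of_lt_of_le hpos hle)

end AuxFinsum
section AuxTrans

open scoped Classical

variable {A B : Type}

/-- `s` enables the success action `w`. -/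
def OmEn {B : Type} (w : B) (s : SCSP B) : Prop := ∃ Θ, Step s (some w) Θ

theorem interp_fin : ∀ (P : PCSP B), (dsupp P.interp).Finite
  | .st s => by
    simp only [PCSP.interp]
    rw [show dsupp (dirac s) = {s} from dsupp_dirac s]
    exact Set.finite_singleton s
  | .pch p P Q => by
    simp only [PCSP.interp]
    exact ((interp_fin P).union (interp_fin Q)).subset dsupp_convex

theorem IsDist.dmapD {X Y : Type} {Δ : Wt X} (h : IsDist Δ) (g : X → Y) :
    IsDist (dmap g Δ) :=
  ⟨dmap_nonneg h.1 g, dmap_fin h.2.1 g, by rw [dmap_mass g h.2.1]; exact h.2.2⟩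

theorem interp_dist : ∀ (P : PCSP B), PWF P →
    IsDist P.interp ∧ ∀ t ∈ dsupp P.interp, SWF t
  | .st s, h => by
    cases h with
    | st hs =>
      refine ⟨⟨?_, ?_, ?_⟩, ?_⟩
      · intro x
        simp only [PCSP.interp, dirac]
        split <;> norm_num
      · simp only [PCSP.interp]
        rw [show dsupp (dirac s) = {s} from dsupp_dirac s]
        exact Set.finite_singleton s
      · simp only [PCSP.interp]
        exact dirac_mass s
      · intro t ht
        simp only [PCSP.interp] at ht
        rw [dsupp_dirac s] at ht
        rw [ht]
        exact hs
  | .pch p P Q, h => by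
    cases h with
    | pch hp0 hp1 hP hQ =>
      obtain ⟨⟨hP0, hPf, hPm⟩, hPs⟩ := interp_dist P hP
      obtain ⟨⟨hQ0, hQf, hQm⟩, hQs⟩ := interp_dist Q hQ
      refine ⟨⟨?_, ?_, ?_⟩, ?_⟩
      · intro x
        simp only [PCSP.interp]
        have := hP0 x; have := hQ0 x; nlinarith
      · simp only [PCSP.interp]
        exact (hPf.union hQf).subset dsupp_convex
      · simp only [PCSP.interp]
        rw [mass_convex p (1-p) hPf hQf, hPm, hQm]; ring
      · intro t ht
        simp only [PCSP.interp] at ht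
        rcases dsupp_convex ht with h1 | h1
        · exact hPs t h1
        · exact hQs t h1

theorem step_fin {s : SCSP B} {α : Option B} {Δ : Wt (SCSP B)} (h : Step s α Δ) :
    (dsupp Δ).Finite := by
  induction h with
  | pre a P => exact interp_fin P
  | ichL P Q => exact interp_fin P
  | ichR P Q => exact interp_fin Q
  | echL _ ih => exact ih
  | echR _ ih => exact ih
  | echTL _ ih => exact dmap_fin ih _
  | echTR _ ih => exact dmap_fin ih _
  | parL _ _ ih => exact dmap_fin ih _
  | parR _ _ ih => exact dmap_fin ih _
  | parS _ _ _ ih₁ ih₂ => exact dmap_fin (prod_fin ih₁ ih₂) _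

theorem step_dist {s : SCSP B} {α : Option B} {Δ : Wt (SCSP B)} (h : Step s α Δ) :
    SWF s → IsDist Δ ∧ ∀ t ∈ dsupp Δ, SWF t := by
  induction h with
  | pre a P =>
    intro hs; cases hs with
    | pre hP => exact interp_dist P hP
  | ichL P Q =>
    intro hs; cases hs with
    | ich hP hQ => exact interp_dist P hP
  | ichR P Q =>
    intro hs; cases hs with
    | ich hP hQ => exact interp_dist Q hQ
  | echL _ ih =>
    intro hs; cases hs with
    | ech h1 h2 => exact ih h1
  | echR _ ih =>
    intro hs; cases hs with
    | ech h1 h2 => exact ih h2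
  | echTL _ ih =>
    intro hs; cases hs with
    | ech h1 h2 =>
      obtain ⟨hd, hsupp⟩ := ih h1
      refine ⟨hd.dmapD _, ?_⟩
      intro t ht
      obtain ⟨v, hv, rfl⟩ := mem_dsupp_dmap ht
      exact SWF.ech (hsupp v hv) h2
  | echTR _ ih =>
    intro hs; cases hs with
    | ech h1 h2 =>
      obtain ⟨hd, hsupp⟩ := ih h2
      refine ⟨hd.dmapD _, ?_⟩
      intro t ht
      obtain ⟨v, hv, rfl⟩ := mem_dsupp_dmap ht
      exact SWF.ech h1 (hsupp v hv)
  | parL _ _ ih =>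
    intro hs; cases hs with
    | par h1 h2 =>
      obtain ⟨hd, hsupp⟩ := ih h1
      refine ⟨hd.dmapD _, ?_⟩
      intro t ht
      obtain ⟨v, hv, rfl⟩ := mem_dsupp_dmap ht
      exact SWF.par (hsupp v hv) h2
  | parR _ _ ih =>
    intro hs; cases hs with
    | par h1 h2 =>
      obtain ⟨hd, hsupp⟩ := ih h2
      refine ⟨hd.dmapD _, ?_⟩
      intro t ht
      obtain ⟨v, hv, rfl⟩ := mem_dsupp_dmap ht
      exact SWF.par h1 (hsupp v hv)
  | parS _ _ _ ih₁ ih₂ =>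
    intro hs; cases hs with
    | par h1 h2 =>
      obtain ⟨hd₁, hsupp₁⟩ := ih₁ h1
      obtain ⟨hd₂, hsupp₂⟩ := ih₂ h2
      have hprod : IsDist (fun q => _ * _) := ⟨fun (q : _ × _) => mul_nonneg (hd₁.1 q.1) (hd₂.1 q.2),
        prod_fin hd₁.2.1 hd₂.2.1, by rw [prod_mass hd₁.2.1 hd₂.2.1, hd₁.2.2, hd₂.2.2]; ring⟩
      refine ⟨hprod.dmapD _, ?_⟩
      intro t ht
      obtain ⟨⟨q₁, q₂⟩, hq, rfl⟩ := mem_dsupp_dmap ht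
      have := dsupp_prod _ _ hq
      rw [Set.mem_prod] at this
      exact SWF.par (hsupp₁ q₁ this.1) (hsupp₂ q₂ this.2)

/-- The success-prefix state `ω.0`. -/
def SUCCt : SCSP (TAct A) := .pre omA (.st .nil)

/-- The internal-choice wrapper `τ.ω.0` replacing observable ω-prefixes. -/
def Wst : SCSP (TAct A) := .ich (.st SUCCt) (.st SUCCt)

mutual
/-- The test transformation: observable ω-prefixes become `τ.ω.0`. -/
def trP : PCSP (TAct A) → PCSP (TAct A)
  | .st s => .st (trS s)
  | .pch p P Q => .pch p (trP P) (trP Q)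
def trS : SCSP (TAct A) → SCSP (TAct A)
  | .nil => .nil
  | .pre (Sum.inl a) P => .pre (Sum.inl a) (trP P)
  | .pre (Sum.inr _) _ => Wst
  | .ich P Q => .ich (trP P) (trP Q)
  | .ech s t => .ech (trS s) (trS t)
  | .par B s t => if omA ∈ B then .par B s t else .par B (trS s) (trS t)
end

theorem trS_pre_om (P : PCSP (TAct A)) : trS (.pre omA P) = Wst := rfl

theorem trP_interp : ∀ (P : PCSP (TAct A)), (trP P).interp = dmap trS P.interp
  | .st s => by
    simp only [trP, PCSP.interp]
    rw [dmap_dirac]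
  | .pch p P Q => by
    simp only [trP, PCSP.interp]
    rw [trP_interp P, trP_interp Q,
      dmap_convex trS p (1-p) (interp_fin P) (interp_fin Q)]

theorem swf_Wst : SWF (Wst (A := A)) :=
  SWF.ich (PWF.st (SWF.pre (PWF.st SWF.nil))) (PWF.st (SWF.pre (PWF.st SWF.nil)))

mutual
theorem trP_pwf : ∀ (P : PCSP (TAct A)), PWF P → PWF (trP P)
  | .st s, h => by
    cases h with
    | st hs => exact PWF.st (trS_swf s hs)
  | .pch p P Q, h => by
    cases h with
    | pch h0 h1 hP hQ => exact PWF.pch h0 h1 (trP_pwf P hP) (trP_pwf Q hQ)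
theorem trS_swf : ∀ (s : SCSP (TAct A)), SWF s → SWF (trS s)
  | .nil, _ => SWF.nil
  | .pre (Sum.inl a) P, h => by
    cases h with
    | pre hP => exact SWF.pre (trP_pwf P hP)
  | .pre (Sum.inr u) P, h => swf_Wst
  | .ich P Q, h => by
    cases h with
    | ich hP hQ => exact SWF.ich (trP_pwf P hP) (trP_pwf Q hQ)
  | .ech s t, h => by
    cases h with
    | ech h1 h2 => exact SWF.ech (trS_swf s h1) (trS_swf t h2)
  | .par C s t, h => by
    cases h with
    | par h1 h2 =>
      simp only [trS]
      split
      · exact SWF.par h1 h2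
      · exact SWF.par (trS_swf s h1) (trS_swf t h2)
end

theorem omA_notin_range : omA ∉ Set.range (Sum.inl : A → TAct A) := by
  rintro ⟨x, hx⟩
  exact Sum.inl_ne_inr hx

theorem omA_notin_image {X : Set A} : omA ∉ (Sum.inl '' X : Set (TAct A)) := by
  rintro ⟨x, _, hx⟩
  exact Sum.inl_ne_inr hx

mutual
theorem mapP_tr : ∀ (R : PCSP A), trP (mapP Sum.inl R) = mapP Sum.inl R
  | .st s => by
    simp only [mapP, trP]
    rw [mapS_tr s]
  | .pch p P Q => by
    simp only [mapP, trP]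
    rw [mapP_tr P, mapP_tr Q]
theorem mapS_tr : ∀ (s : SCSP A), trS (mapS Sum.inl s) = mapS Sum.inl s
  | .nil => rfl
  | .pre a P => by
    simp only [mapS, trS]
    rw [mapP_tr P]
  | .ich P Q => by
    simp only [mapS, trS]
    rw [mapP_tr P, mapP_tr Q]
  | .ech s t => by
    simp only [mapS, trS]
    rw [mapS_tr s, mapS_tr t]
  | .par X s t => by
    simp only [mapS, trS]
    rw [if_neg omA_notin_image, mapS_tr s, mapS_tr t]
end

theorem trP_parCS (C : Set (TAct A)) (hB : omA ∉ C) (s : SCSP (TAct A)) :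
    ∀ (S : PCSP (TAct A)), trP (parCS C s S) = parCS C (trS s) (trP S)
  | .st t => by
    simp only [parCS, trP, trS]
    rw [if_neg hB]
  | .pch p S₁ S₂ => by
    simp only [parCS, trP]
    rw [trP_parCS C hB s S₁, trP_parCS C hB s S₂]

theorem trP_parC (C : Set (TAct A)) (hB : omA ∉ C) :
    ∀ (T S : PCSP (TAct A)), trP (parC C T S) = parC C (trP T) (trP S)
  | .st s, S => by
    simp only [parC, trP]
    exact trP_parCS C hB s S
  | .pch p T₁ T₂, S => by
    simp only [parC, trP]
    rw [trP_parC C hB T₁ S, trP_parC C hB T₂ S]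

theorem trP_applyTest (T : PCSP (TAct A)) (R : PCSP A) :
    trP (applyTest T R) = applyTest (trP T) R := by
  unfold applyTest
  rw [trP_parC _ omA_notin_range T (mapP Sum.inl R), mapP_tr]

mutual
theorem pwf_mapP (f : A → B) : ∀ (P : PCSP A), PWF P → PWF (mapP f P)
  | .st s, h => by
    cases h with
    | st hs => exact PWF.st (swf_mapS f s hs)
  | .pch p P Q, h => by
    cases h with
    | pch h0 h1 hP hQ => exact PWF.pch h0 h1 (pwf_mapP f P hP) (pwf_mapP f Q hQ)
theorem swf_mapS (f : A → B) : ∀ (s : SCSP A), SWF s → SWF (mapS f s)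
  | .nil, _ => SWF.nil
  | .pre a P, h => by
    cases h with
    | pre hP => exact SWF.pre (pwf_mapP f P hP)
  | .ich P Q, h => by
    cases h with
    | ich hP hQ => exact SWF.ich (pwf_mapP f P hP) (pwf_mapP f Q hQ)
  | .ech s t, h => by
    cases h with
    | ech h1 h2 => exact SWF.ech (swf_mapS f s h1) (swf_mapS f t h2)
  | .par X s t, h => by
    cases h with
    | par h1 h2 => exact SWF.par (swf_mapS f s h1) (swf_mapS f t h2)
end

theorem pwf_parCS (C : Set (TAct A)) {s : SCSP (TAct A)} (hs : SWF s) :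
    ∀ (S : PCSP (TAct A)), PWF S → PWF (parCS C s S)
  | .st t, h => by
    cases h with
    | st ht => exact PWF.st (SWF.par hs ht)
  | .pch p S₁ S₂, h => by
    cases h with
    | pch h0 h1 h2 h3 =>
      exact PWF.pch h0 h1 (pwf_parCS C hs S₁ h2) (pwf_parCS C hs S₂ h3)

theorem pwf_parC (C : Set (TAct A)) :
    ∀ (T : PCSP (TAct A)), PWF T → ∀ (S : PCSP (TAct A)), PWF S → PWF (parC C T S)
  | .st s, h, S, hS => by
    cases h with
    | st hs => exact pwf_parCS C hs S hS
  | .pch p T₁ T₂, h, S, hS => by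
    cases h with
    | pch h0 h1 h2 h3 =>
      exact PWF.pch h0 h1 (pwf_parC C T₁ h2 S hS) (pwf_parC C T₂ h3 S hS)

theorem pwf_applyTest {T : PCSP (TAct A)} (hT : PWF T) {R : PCSP A} (hR : PWF R) :
    PWF (applyTest T R) :=
  pwf_parC _ T hT _ (pwf_mapP Sum.inl R hR)

end AuxTrans
section AuxStep

open scoped Classical

variable {A : Type}

lemma dmap_congr {X Y : Type} {f g : X → Y} (h : ∀ x, f x = g x) (Δ : Wt X) :
    dmap f Δ = dmap g Δ := by
  have : f = g := funext h
  rw [this]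

theorem interp_st (s : SCSP A) : (PCSP.st s).interp = dirac s := rfl

/-- Forward simulation of non-ω steps by the transformed term. -/
theorem S1 {u : SCSP (TAct A)} {α : Option (TAct A)} {Δ : Wt (SCSP (TAct A))}
    (h : Step u α Δ) : α ≠ some omA → Step (trS u) α (dmap trS Δ) := by
  induction h with
  | pre a P =>
    intro hα
    cases a with
    | inl a =>
      have : trS (.pre (Sum.inl a) P) = .pre (Sum.inl a) (trP P) := rfl
      rw [this, ← trP_interp]
      exact Step.pre _ _
    | inr v =>
      cases v
      exact absurd rfl hα
  | ichL P Q =>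
    intro _
    have : trS (.ich P Q) = .ich (trP P) (trP Q) := rfl
    rw [this, ← trP_interp]
    exact Step.ichL _ _
  | ichR P Q =>
    intro _
    have : trS (.ich P Q) = .ich (trP P) (trP Q) := rfl
    rw [this, ← trP_interp]
    exact Step.ichR _ _
  | echL h1 ih =>
    intro hα
    exact Step.echL (ih hα)
  | echR h1 ih =>
    intro hα
    exact Step.echR (ih hα)
  | echTL h1 ih =>
    rename_i s₁ s₂ Δ₀
    intro _
    have hfin := step_fin h1
    have hstep := Step.echTL (s₂ := trS s₂) (ih (by simp))
    have e1 : dmap (fun t => SCSP.ech t (trS s₂)) (dmap trS Δ₀)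
        = dmap trS (dmap (fun t => SCSP.ech t s₂) Δ₀) := by
      rw [dmap_dmap _ _ hfin, dmap_dmap _ _ hfin]
      exact dmap_congr (fun x => rfl) Δ₀
    rw [e1] at hstep
    exact hstep
  | echTR h1 ih =>
    rename_i s₁ s₂ Δ₀
    intro _
    have hfin := step_fin h1
    have hstep := Step.echTR (s₁ := trS s₁) (ih (by simp))
    have e1 : dmap (fun t => SCSP.ech (trS s₁) t) (dmap trS Δ₀)
        = dmap trS (dmap (fun t => SCSP.ech s₁ t) Δ₀) := by
      rw [dmap_dmap _ _ hfin, dmap_dmap _ _ hfin]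
      exact dmap_congr (fun x => rfl) Δ₀
    rw [e1] at hstep
    exact hstep
  | parL h1 hside ih =>
    rename_i C s₁ s₂ α' Δ₀
    intro hα
    have hfin := step_fin h1
    by_cases hC : omA ∈ C
    · have htr : trS (.par C s₁ s₂) = .par C s₁ s₂ := by
        simp only [trS]; rw [if_pos hC]
      rw [htr]
      have hid : dmap trS (dmap (fun t => SCSP.par C t s₂) Δ₀)
          = dmap (fun t => SCSP.par C t s₂) Δ₀ := by
        apply dmap_id_on
        intro x hx
        obtain ⟨v, hv, rfl⟩ := mem_dsupp_dmap hx
        simp only [trS]; rw [if_pos hC]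
      rw [hid]
      exact Step.parL h1 hside
    · have htr : trS (.par C s₁ s₂) = .par C (trS s₁) (trS s₂) := by
        simp only [trS]; rw [if_neg hC]
      rw [htr]
      have hstep := Step.parL (s₂ := trS s₂) (ih hα) hside
      have e1 : dmap (fun t => SCSP.par C t (trS s₂)) (dmap trS Δ₀)
          = dmap trS (dmap (fun t => SCSP.par C t s₂) Δ₀) := by
        rw [dmap_dmap _ _ hfin, dmap_dmap _ _ hfin]
        refine dmap_congr (fun x => ?_) Δ₀
        show SCSP.par C (trS x) (trS s₂) = trS (SCSP.par C x s₂)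
        simp only [trS]; rw [if_neg hC]
      rw [e1] at hstep
      exact hstep
  | parR h1 hside ih =>
    rename_i C s₁ s₂ α' Δ₀
    intro hα
    have hfin := step_fin h1
    by_cases hC : omA ∈ C
    · have htr : trS (.par C s₁ s₂) = .par C s₁ s₂ := by
        simp only [trS]; rw [if_pos hC]
      rw [htr]
      have hid : dmap trS (dmap (fun t => SCSP.par C s₁ t) Δ₀)
          = dmap (fun t => SCSP.par C s₁ t) Δ₀ := by
        apply dmap_id_on
        intro x hx
        obtain ⟨v, hv, rfl⟩ := mem_dsupp_dmap hx
        simp only [trS]; rw [if_pos hC]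
      rw [hid]
      exact Step.parR h1 hside
    · have htr : trS (.par C s₁ s₂) = .par C (trS s₁) (trS s₂) := by
        simp only [trS]; rw [if_neg hC]
      rw [htr]
      have hstep := Step.parR (s₁ := trS s₁) (ih hα) hside
      have e1 : dmap (fun t => SCSP.par C (trS s₁) t) (dmap trS Δ₀)
          = dmap trS (dmap (fun t => SCSP.par C s₁ t) Δ₀) := by
        rw [dmap_dmap _ _ hfin, dmap_dmap _ _ hfin]
        refine dmap_congr (fun x => ?_) Δ₀
        show SCSP.par C (trS s₁) (trS x) = trS (SCSP.par C s₁ x)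
        simp only [trS]; rw [if_neg hC]
      rw [e1] at hstep
      exact hstep
  | parS hmem h1 h2 ih₁ ih₂ =>
    rename_i C s₁ s₂ a Δ₁ Δ₂
    intro _
    have hfin₁ := step_fin h1
    have hfin₂ := step_fin h2
    by_cases hC : omA ∈ C
    · have htr : trS (.par C s₁ s₂) = .par C s₁ s₂ := by
        simp only [trS]; rw [if_pos hC]
      rw [htr]
      have hid : dmap trS
          (dmap (fun q : SCSP (TAct A) × SCSP (TAct A) => SCSP.par C q.1 q.2)
            (fun q => Δ₁ q.1 * Δ₂ q.2))
          = dmap (fun q : SCSP (TAct A) × SCSP (TAct A) => SCSP.par C q.1 q.2)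
            (fun q => Δ₁ q.1 * Δ₂ q.2) := by
        apply dmap_id_on
        intro x hx
        obtain ⟨⟨q₁, q₂⟩, hq, rfl⟩ := mem_dsupp_dmap hx
        simp only [trS]; rw [if_pos hC]
      rw [hid]
      exact Step.parS hmem h1 h2
    · have ha : a ≠ omA := fun hh => hC (hh ▸ hmem)
      have htr : trS (.par C s₁ s₂) = .par C (trS s₁) (trS s₂) := by
        simp only [trS]; rw [if_neg hC]
      rw [htr]
      have hstep := Step.parS hmem (ih₁ (by simp [ha])) (ih₂ (by simp [ha]))
      have e1 : dmap (fun q : SCSP (TAct A) × SCSP (TAct A) => SCSP.par C q.1 q.2)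
            (fun q => dmap trS Δ₁ q.1 * dmap trS Δ₂ q.2)
          = dmap trS
            (dmap (fun q : SCSP (TAct A) × SCSP (TAct A) => SCSP.par C q.1 q.2)
              (fun q => Δ₁ q.1 * Δ₂ q.2)) := by
        rw [prod_dmap trS trS hfin₁ hfin₂]
        rw [dmap_dmap _ _ (prod_fin hfin₁ hfin₂), dmap_dmap _ _ (prod_fin hfin₁ hfin₂)]
        refine dmap_congr (fun q => ?_) _
        show SCSP.par C (trS q.1) (trS q.2) = trS (SCSP.par C q.1 q.2)
        simp only [trS]; rw [if_neg hC]
      rw [e1] at hstep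
      exact hstep

/-- The transformed term never enables ω. -/
theorem S5 : ∀ (u : SCSP (TAct A)) {Θ : Wt (SCSP (TAct A))},
    ¬ Step (trS u) (some omA) Θ
  | .nil, Θ, h => by cases h
  | .pre (Sum.inl a) P, Θ, h => by cases h
  | .pre (Sum.inr v) P, Θ, h => by cases h
  | .ich P Q, Θ, h => by cases h
  | .ech s t, Θ, h => by
    cases h with
    | echL h1 => exact S5 s h1
    | echR h1 => exact S5 t h1
  | .par C s t, Θ, h => by
    by_cases hC : omA ∈ C
    · rw [show trS (.par C s t) = .par C s t by simp only [trS]; rw [if_pos hC]] at h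
      cases h with
      | parL h1 hside => exact hside omA rfl hC
      | parR h1 hside => exact hside omA rfl hC
    · rw [show trS (.par C s t) = .par C (trS s) (trS t) by
        simp only [trS]; rw [if_neg hC]] at h
      cases h with
      | parL h1 _ => exact S5 s h1
      | parR h1 _ => exact S5 t h1

/-- The transformed term offers a τ-flag leading to ω-enabled states whenever the
original term enables ω. -/
theorem S3 {u : SCSP (TAct A)} {α : Option (TAct A)} {Θ : Wt (SCSP (TAct A))}
    (h : Step u α Θ) : α = some omA →
    ∃ Δ', Step (trS u) none Δ' ∧ ∀ t ∈ dsupp Δ', OmEn omA t := by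
  induction h with
  | pre a P =>
    intro hα
    cases a with
    | inl a => exact absurd hα (by simp [omA])
    | inr v =>
      cases v
      refine ⟨dirac SUCCt, ?_, ?_⟩
      · have := Step.ichL (PCSP.st (SUCCt (A := A))) (.st SUCCt)
        rw [interp_st] at this
        exact this
      · intro t ht
        rw [dsupp_dirac] at ht
        rw [ht]
        exact ⟨_, Step.pre omA (.st .nil)⟩
  | ichL P Q => intro hα; exact absurd hα (by simp)
  | ichR P Q => intro hα; exact absurd hα (by simp)
  | echL h1 ih =>
    rename_i s₁ s₂ a Δ₀
    intro hα
    obtain ⟨Δ', h2, h3⟩ := ih hα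
    refine ⟨_, Step.echTL (s₂ := trS s₂) h2, ?_⟩
    intro t ht
    obtain ⟨v, hv, rfl⟩ := mem_dsupp_dmap ht
    obtain ⟨Θ', hΘ'⟩ := h3 v hv
    exact ⟨_, Step.echL hΘ'⟩
  | echR h1 ih =>
    rename_i s₁ s₂ a Δ₀
    intro hα
    obtain ⟨Δ', h2, h3⟩ := ih hα
    refine ⟨_, Step.echTR (s₁ := trS s₁) h2, ?_⟩
    intro t ht
    obtain ⟨v, hv, rfl⟩ := mem_dsupp_dmap ht
    obtain ⟨Θ', hΘ'⟩ := h3 v hv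
    exact ⟨_, Step.echR hΘ'⟩
  | echTL h1 ih => intro hα; exact absurd hα (by simp)
  | echTR h1 ih => intro hα; exact absurd hα (by simp)
  | parL h1 hside ih =>
    rename_i C s₁ s₂ α' Δ₀
    intro hα
    subst hα
    have hC : omA ∉ C := hside omA rfl
    obtain ⟨Δ', h2, h3⟩ := ih rfl
    have htr : trS (.par C s₁ s₂) = .par C (trS s₁) (trS s₂) := by
      simp only [trS]; rw [if_neg hC]
    rw [htr]
    refine ⟨_, Step.parL (s₂ := trS s₂) h2 (fun a ha => by cases ha), ?_⟩
    intro t ht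
    obtain ⟨v, hv, rfl⟩ := mem_dsupp_dmap ht
    obtain ⟨Θ', hΘ'⟩ := h3 v hv
    exact ⟨_, Step.parL hΘ' (fun a ha => by cases ha; exact hC)⟩
  | parR h1 hside ih =>
    rename_i C s₁ s₂ α' Δ₀
    intro hα
    subst hα
    have hC : omA ∉ C := hside omA rfl
    obtain ⟨Δ', h2, h3⟩ := ih rfl
    have htr : trS (.par C s₁ s₂) = .par C (trS s₁) (trS s₂) := by
      simp only [trS]; rw [if_neg hC]
    rw [htr]
    refine ⟨_, Step.parR (s₁ := trS s₁) h2 (fun a ha => by cases ha), ?_⟩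
    intro t ht
    obtain ⟨v, hv, rfl⟩ := mem_dsupp_dmap ht
    obtain ⟨Θ', hΘ'⟩ := h3 v hv
    exact ⟨_, Step.parR hΘ' (fun a ha => by cases ha; exact hC)⟩
  | parS hmem h1 h2 ih₁ ih₂ => intro hα; exact absurd hα (by simp)

end AuxStep
section AuxInv

open scoped Classical

variable {A : Type}

/-- Inversion: every step of the transformed term is either the image of a step of
the original term, or a τ-flag leading to ω-enabled states. -/
theorem S4 : ∀ (u : SCSP (TAct A)) {α : Option (TAct A)} {Δ' : Wt (SCSP (TAct A))},
    Step (trS u) α Δ' →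
    (∃ Δ, Step u α Δ ∧ Δ' = dmap trS Δ) ∨
      (α = none ∧ OmEn omA u ∧ ∀ t ∈ dsupp Δ', OmEn omA t)
  | .nil, α, Δ', h => by cases h
  | .pre (Sum.inl a) P, α, Δ', h => by
    cases h with
    | pre => exact Or.inl ⟨P.interp, Step.pre _ P, trP_interp P⟩
  | .pre (Sum.inr v) P, α, Δ', h => by
    cases v
    have hen : OmEn omA (SCSP.pre (Sum.inr ()) P) := ⟨_, Step.pre omA P⟩
    have hsupp : ∀ t ∈ dsupp ((PCSP.st (SUCCt (A := A))).interp), OmEn omA t := by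
      intro t ht
      rw [interp_st, dsupp_dirac] at ht
      rw [ht]
      exact ⟨_, Step.pre omA (.st .nil)⟩
    cases h with
    | ichL => exact Or.inr ⟨rfl, hen, hsupp⟩
    | ichR => exact Or.inr ⟨rfl, hen, hsupp⟩
  | .ich P Q, α, Δ', h => by
    cases h with
    | ichL => exact Or.inl ⟨P.interp, Step.ichL P Q, trP_interp P⟩
    | ichR => exact Or.inl ⟨Q.interp, Step.ichR P Q, trP_interp Q⟩
  | .ech s t, α, Δ', h => by
    cases h with
    | echL h1 =>
      rcases S4 s h1 with ⟨Δ, hs, rfl⟩ | ⟨hα, _, _⟩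
      · exact Or.inl ⟨Δ, Step.echL hs, rfl⟩
      · simp at hα
    | echR h1 =>
      rcases S4 t h1 with ⟨Δ, hs, rfl⟩ | ⟨hα, _, _⟩
      · exact Or.inl ⟨Δ, Step.echR hs, rfl⟩
      · simp at hα
    | echTL h1 =>
      rcases S4 s h1 with ⟨Δ, hs, rfl⟩ | ⟨-, ⟨Θ, hω⟩, hen⟩
      · refine Or.inl ⟨dmap (fun x => SCSP.ech x t) Δ, Step.echTL hs, ?_⟩
        rw [dmap_dmap _ _ (step_fin hs), dmap_dmap _ _ (step_fin hs)]
        exact dmap_congr (fun x => rfl) Δ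
      · refine Or.inr ⟨rfl, ⟨_, Step.echL hω⟩, ?_⟩
        intro x hx
        obtain ⟨v, hv, rfl⟩ := mem_dsupp_dmap hx
        obtain ⟨Θ', hΘ'⟩ := hen v hv
        exact ⟨_, Step.echL hΘ'⟩
    | echTR h1 =>
      rcases S4 t h1 with ⟨Δ, hs, rfl⟩ | ⟨-, ⟨Θ, hω⟩, hen⟩
      · refine Or.inl ⟨dmap (fun x => SCSP.ech s x) Δ, Step.echTR hs, ?_⟩
        rw [dmap_dmap _ _ (step_fin hs), dmap_dmap _ _ (step_fin hs)]
        exact dmap_congr (fun x => rfl) Δ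
      · refine Or.inr ⟨rfl, ⟨_, Step.echR hω⟩, ?_⟩
        intro x hx
        obtain ⟨v, hv, rfl⟩ := mem_dsupp_dmap hx
        obtain ⟨Θ', hΘ'⟩ := hen v hv
        exact ⟨_, Step.echR hΘ'⟩
  | .par C s t, α, Δ', h => by
    by_cases hC : omA ∈ C
    · rw [show trS (.par C s t) = .par C s t by simp only [trS]; rw [if_pos hC]] at h
      have hshape : ∀ x ∈ dsupp Δ', ∃ p q, x = SCSP.par C p q := by
        cases h with
        | parL h1 _ =>
          intro x hx
          obtain ⟨v, hv, rfl⟩ := mem_dsupp_dmap hx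
          exact ⟨_, _, rfl⟩
        | parR h1 _ =>
          intro x hx
          obtain ⟨v, hv, rfl⟩ := mem_dsupp_dmap hx
          exact ⟨_, _, rfl⟩
        | parS hmem h1 h2 =>
          intro x hx
          obtain ⟨⟨q₁, q₂⟩, hq, rfl⟩ := mem_dsupp_dmap hx
          exact ⟨_, _, rfl⟩
      refine Or.inl ⟨Δ', h, ?_⟩
      refine (dmap_id_on (fun x hx => ?_)).symm
      obtain ⟨p, q, rfl⟩ := hshape x hx
      simp only [trS]; rw [if_pos hC]
    · rw [show trS (.par C s t) = .par C (trS s) (trS t) by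
        simp only [trS]; rw [if_neg hC]] at h
      cases h with
      | parL h1 hside =>
        rcases S4 s h1 with ⟨Δ, hs, rfl⟩ | ⟨rfl, ⟨Θ, hω⟩, hen⟩
        · refine Or.inl ⟨dmap (fun x => SCSP.par C x t) Δ, Step.parL hs hside, ?_⟩
          rw [dmap_dmap _ _ (step_fin hs), dmap_dmap _ _ (step_fin hs)]
          refine dmap_congr (fun x => ?_) Δ
          show SCSP.par C (trS x) (trS t) = trS (SCSP.par C x t)
          simp only [trS]; rw [if_neg hC]
        · refine Or.inr ⟨rfl, ⟨_, Step.parL hω (fun a ha => by cases ha; exact hC)⟩, ?_⟩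
          intro x hx
          obtain ⟨v, hv, rfl⟩ := mem_dsupp_dmap hx
          obtain ⟨Θ', hΘ'⟩ := hen v hv
          exact ⟨_, Step.parL hΘ' (fun a ha => by cases ha; exact hC)⟩
      | parR h1 hside =>
        rcases S4 t h1 with ⟨Δ, hs, rfl⟩ | ⟨rfl, ⟨Θ, hω⟩, hen⟩
        · refine Or.inl ⟨dmap (fun x => SCSP.par C s x) Δ, Step.parR hs hside, ?_⟩
          rw [dmap_dmap _ _ (step_fin hs), dmap_dmap _ _ (step_fin hs)]
          refine dmap_congr (fun x => ?_) Δ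
          show SCSP.par C (trS s) (trS x) = trS (SCSP.par C s x)
          simp only [trS]; rw [if_neg hC]
        · refine Or.inr ⟨rfl, ⟨_, Step.parR hω (fun a ha => by cases ha; exact hC)⟩, ?_⟩
          intro x hx
          obtain ⟨v, hv, rfl⟩ := mem_dsupp_dmap hx
          obtain ⟨Θ', hΘ'⟩ := hen v hv
          exact ⟨_, Step.parR hΘ' (fun a ha => by cases ha; exact hC)⟩
      | parS hmem h1 h2 =>
        rcases S4 s h1 with ⟨Δ₁, hs1, rfl⟩ | ⟨hα, _, _⟩
        · rcases S4 t h2 with ⟨Δ₂, hs2, rfl⟩ | ⟨hα, _, _⟩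
          · refine Or.inl
              ⟨dmap (fun q : SCSP (TAct A) × SCSP (TAct A) => SCSP.par C q.1 q.2)
                (fun q => Δ₁ q.1 * Δ₂ q.2), Step.parS hmem hs1 hs2, ?_⟩
            have hfin₁ := step_fin hs1
            have hfin₂ := step_fin hs2
            rw [prod_dmap trS trS hfin₁ hfin₂]
            rw [dmap_dmap _ _ (prod_fin hfin₁ hfin₂), dmap_dmap _ _ (prod_fin hfin₁ hfin₂)]
            refine dmap_congr (fun q => ?_) _
            show SCSP.par C (trS q.1) (trS q.2) = trS (SCSP.par C q.1 q.2)
            simp only [trS]; rw [if_neg hC]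
          · simp at hα
        · simp at hα

end AuxInv
section AuxML

open scoped Classical

variable {A : Type}

lemma exists_fiber_max {X Y : Type} {Δ : Wt X} (hfin : (dsupp Δ).Finite) {G : X → Y} {y : Y}
    (hy : y ∈ dsupp (dmap G Δ)) (f : X → ℝ) :
    ∃ t₀ ∈ dsupp Δ, G t₀ = y ∧ ∀ t ∈ dsupp Δ, G t = y → f t ≤ f t₀ := by
  have hSfin : ({t | t ∈ dsupp Δ ∧ G t = y} : Set X).Finite :=
    hfin.subset (fun t ht => ht.1)
  have hSne : ({t | t ∈ dsupp Δ ∧ G t = y} : Set X).Nonempty := by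
    obtain ⟨x, hx, hgx⟩ := mem_dsupp_dmap hy
    exact ⟨x, hx, hgx⟩
  obtain ⟨t₀, ht₀, hmax⟩ := Set.exists_max_image _ f hSfin hSne
  exact ⟨t₀, ht₀.1, ht₀.2, fun t ht hGt => hmax t ⟨ht, hGt⟩⟩

lemma exists_fiber_min {X Y : Type} {Δ : Wt X} (hfin : (dsupp Δ).Finite) {G : X → Y} {y : Y}
    (hy : y ∈ dsupp (dmap G Δ)) (f : X → ℝ) :
    ∃ t₀ ∈ dsupp Δ, G t₀ = y ∧ ∀ t ∈ dsupp Δ, G t = y → f t₀ ≤ f t := by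
  have hSfin : ({t | t ∈ dsupp Δ ∧ G t = y} : Set X).Finite :=
    hfin.subset (fun t ht => ht.1)
  have hSne : ({t | t ∈ dsupp Δ ∧ G t = y} : Set X).Nonempty := by
    obtain ⟨x, hx, hgx⟩ := mem_dsupp_dmap hy
    exact ⟨x, hx, hgx⟩
  obtain ⟨t₀, ht₀, hmin⟩ := Set.exists_min_image _ f hSfin hSne
  exact ⟨t₀, ht₀.1, ht₀.2, fun t ht hGt => hmin t ⟨ht, hGt⟩⟩

lemma vmem_of_omen {B : Type} {w : B} {s : SCSP B} (h : OmEn w s) : VMem w s 1 := by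
  obtain ⟨Θ, hΘ⟩ := h
  exact VMem.succ hΘ

lemma vmem_eq_one {B : Type} {w : B} {s : SCSP B} {r : ℝ}
    (hen : OmEn w s) (h : VMem w s r) : r = 1 := by
  cases h with
  | succ _ => rfl
  | step f hno hst _ =>
    obtain ⟨Θ, hΘ⟩ := hen
    exact absurd hΘ (hno Θ)
  | stuck hst =>
    obtain ⟨Θ, hΘ⟩ := hen
    exact absurd hΘ (hst _ _)

/-- Main lemma, direction 1: action-based outcomes of `u` are approximated on both
sides by state-based outcomes of `trS u`. -/
theorem ML1 {u : SCSP (TAct A)} {r : ℝ} (h : VBarMem omA u r) : SWF u →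
    (∃ r₁, VMem omA (trS u) r₁ ∧ r ≤ r₁) ∧ (∃ r₂, VMem omA (trS u) r₂ ∧ r₂ ≤ r) := by
  induction h with
  | succ hω =>
    rename_i s Δ
    intro hu
    obtain ⟨Δ', hstep, hen⟩ := S3 hω rfl
    obtain ⟨hd, _⟩ := step_dist hstep (trS_swf s hu)
    have hv : VMem omA (trS s) (dexp Δ' (fun _ => 1)) :=
      VMem.step (fun _ => 1) (fun Θ => S5 s) hstep (fun t ht => vmem_of_omen (hen t ht))
    have he : dexp Δ' (fun _ => (1 : ℝ)) = 1 := by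
      rw [dexp_eq_mass_of (fun x _ => rfl), hd.2.2]
    rw [he] at hv
    exact ⟨⟨1, hv, le_refl 1⟩, ⟨1, hv, le_refl 1⟩⟩
  | step f hne hstep hmem ih =>
    rename_i s α Δ
    intro hu
    obtain ⟨hd, hsw⟩ := step_dist hstep hu
    have hfin := hd.2.1
    have h0 := hd.1
    have hstep' := S1 hstep hne
    constructor
    · have H : ∀ y ∈ dsupp (dmap trS Δ), ∃ ry, VMem omA y ry ∧
          ∀ t ∈ dsupp Δ, trS t = y → f t ≤ ry := by
        intro y hy
        obtain ⟨t₀, ht₀, hGt₀, hmax⟩ := exists_fiber_max hfin hy f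
        obtain ⟨r₁, hr₁, hle⟩ := (ih t₀ ht₀ (hsw t₀ ht₀)).1
        rw [hGt₀] at hr₁
        exact ⟨r₁, hr₁, fun t ht hty => le_trans (hmax t ht hty) hle⟩
      choose! g hg1 hg2 using H
      refine ⟨dexp (dmap trS Δ) g, VMem.step g (fun Θ => S5 s) hstep' hg1, ?_⟩
      rw [dexp_dmap trS hfin g]
      refine dexp_mono hfin h0 (fun t ht => ?_)
      exact hg2 (trS t) (mem_dsupp_dmap_of_mem h0 hfin trS ht) t ht rfl
    · have H : ∀ y ∈ dsupp (dmap trS Δ), ∃ ry, VMem omA y ry ∧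
          ∀ t ∈ dsupp Δ, trS t = y → ry ≤ f t := by
        intro y hy
        obtain ⟨t₀, ht₀, hGt₀, hmin⟩ := exists_fiber_min hfin hy f
        obtain ⟨r₂, hr₂, hle⟩ := (ih t₀ ht₀ (hsw t₀ ht₀)).2
        rw [hGt₀] at hr₂
        exact ⟨r₂, hr₂, fun t ht hty => le_trans hle (hmin t ht hty)⟩
      choose! g hg1 hg2 using H
      refine ⟨dexp (dmap trS Δ) g, VMem.step g (fun Θ => S5 s) hstep' hg1, ?_⟩
      rw [dexp_dmap trS hfin g]
      refine dexp_mono hfin h0 (fun t ht => ?_)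
      exact hg2 (trS t) (mem_dsupp_dmap_of_mem h0 hfin trS ht) t ht rfl
  | stuck hst =>
    rename_i s
    intro hu
    have hstuck : ∀ α Δ', ¬ Step (trS s) α Δ' := by
      intro α Δ' hstep
      rcases S4 s hstep with ⟨Δ, hs, _⟩ | ⟨_, ⟨Θ, hω⟩, _⟩
      · exact hst _ _ hs
      · exact hst _ _ hω
    exact ⟨⟨0, VMem.stuck hstuck, le_refl 0⟩, ⟨0, VMem.stuck hstuck, le_refl 0⟩⟩

/-- Main lemma, direction 2: state-based outcomes of `trS u` are approximated on both
sides by action-based outcomes of `u`. -/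
theorem ML2 {v : SCSP (TAct A)} {r : ℝ} (h : VMem omA v r) :
    ∀ u, SWF u → v = trS u →
    (∃ r₁, VBarMem omA u r₁ ∧ r ≤ r₁) ∧ (∃ r₂, VBarMem omA u r₂ ∧ r₂ ≤ r) := by
  induction h with
  | succ hω =>
    rintro u hu rfl
    exact absurd hω (S5 u)
  | step f hno hstep hmem ih =>
    rename_i s α Δ'
    rintro u hu rfl
    rcases S4 u hstep with ⟨Δ₀, hstep₀, rfl⟩ | ⟨rfl, hen, henall⟩
    · have hne : α ≠ some omA := by
        rintro rfl
        exact S5 u hstep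
      obtain ⟨hd, hsw⟩ := step_dist hstep₀ hu
      have hfin := hd.2.1
      have h0 := hd.1
      constructor
      · have H : ∀ t ∈ dsupp Δ₀, ∃ rt, VBarMem omA t rt ∧ f (trS t) ≤ rt := by
          intro t ht
          exact (ih (trS t) (mem_dsupp_dmap_of_mem h0 hfin trS ht) t (hsw t ht) rfl).1
        choose! g hg1 hg2 using H
        refine ⟨dexp Δ₀ g, VBarMem.step g hne hstep₀ hg1, ?_⟩
        rw [dexp_dmap trS hfin f]
        exact dexp_mono hfin h0 hg2
      · have H : ∀ t ∈ dsupp Δ₀, ∃ rt, VBarMem omA t rt ∧ rt ≤ f (trS t) := by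
          intro t ht
          exact (ih (trS t) (mem_dsupp_dmap_of_mem h0 hfin trS ht) t (hsw t ht) rfl).2
        choose! g hg1 hg2 using H
        refine ⟨dexp Δ₀ g, VBarMem.step g hne hstep₀ hg1, ?_⟩
        rw [dexp_dmap trS hfin f]
        exact dexp_mono hfin h0 hg2
    · have hone : ∀ t ∈ dsupp Δ', f t = 1 := fun t ht =>
        vmem_eq_one (henall t ht) (hmem t ht)
      have hd := (step_dist hstep (trS_swf u hu)).1
      have hmass : dexp Δ' f = 1 := by rw [dexp_eq_mass_of hone, hd.2.2]
      rw [hmass]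
      obtain ⟨Θ, hω⟩ := hen
      exact ⟨⟨1, VBarMem.succ hω, le_refl 1⟩, ⟨1, VBarMem.succ hω, le_refl 1⟩⟩
  | stuck hst =>
    rintro u hu rfl
    have hstuck : ∀ α Δ, ¬ Step u α Δ := by
      intro α Δ hstep
      by_cases hα : α = some omA
      · subst hα
        obtain ⟨Δ'', hs, _⟩ := S3 hstep rfl
        exact hst _ _ hs
      · exact hst _ _ (S1 hstep hα)
    exact ⟨⟨0, VBarMem.stuck hstuck, le_refl 0⟩, ⟨0, VBarMem.stuck hstuck, le_refl 0⟩⟩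

end AuxML
section AuxFinal

open scoped Classical

variable {A : Type}

/-- Distribution-level transfer between action-based and state-based outcome sets. -/
theorem MLD {Δ₀ : Wt (SCSP (TAct A))} (hd : IsDist Δ₀) (hsw : ∀ t ∈ dsupp Δ₀, SWF t) :
    (∀ r ∈ VBarD omA Δ₀, (∃ r₁ ∈ VD omA (dmap trS Δ₀), r ≤ r₁) ∧
        (∃ r₂ ∈ VD omA (dmap trS Δ₀), r₂ ≤ r)) ∧
    (∀ r ∈ VD omA (dmap trS Δ₀), (∃ r₁ ∈ VBarD omA Δ₀, r ≤ r₁) ∧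
        (∃ r₂ ∈ VBarD omA Δ₀, r₂ ≤ r)) := by
  have hfin := hd.2.1
  have h0 := hd.1
  constructor
  · rintro r ⟨f, hf, rfl⟩
    constructor
    · have H : ∀ y ∈ dsupp (dmap trS Δ₀), ∃ ry, VMem omA y ry ∧
          ∀ t ∈ dsupp Δ₀, trS t = y → f t ≤ ry := by
        intro y hy
        obtain ⟨t₀, ht₀, hGt₀, hmax⟩ := exists_fiber_max hfin hy f
        obtain ⟨r₁, hr₁, hle⟩ := (ML1 (hf t₀ ht₀) (hsw t₀ ht₀)).1
        rw [hGt₀] at hr₁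
        exact ⟨r₁, hr₁, fun t ht hty => le_trans (hmax t ht hty) hle⟩
      choose! g hg1 hg2 using H
      refine ⟨dexp (dmap trS Δ₀) g, ⟨g, hg1, rfl⟩, ?_⟩
      rw [dexp_dmap trS hfin g]
      refine dexp_mono hfin h0 (fun t ht => ?_)
      exact hg2 (trS t) (mem_dsupp_dmap_of_mem h0 hfin trS ht) t ht rfl
    · have H : ∀ y ∈ dsupp (dmap trS Δ₀), ∃ ry, VMem omA y ry ∧
          ∀ t ∈ dsupp Δ₀, trS t = y → ry ≤ f t := by
        intro y hy
        obtain ⟨t₀, ht₀, hGt₀, hmin⟩ := exists_fiber_min hfin hy f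
        obtain ⟨r₂, hr₂, hle⟩ := (ML1 (hf t₀ ht₀) (hsw t₀ ht₀)).2
        rw [hGt₀] at hr₂
        exact ⟨r₂, hr₂, fun t ht hty => le_trans hle (hmin t ht hty)⟩
      choose! g hg1 hg2 using H
      refine ⟨dexp (dmap trS Δ₀) g, ⟨g, hg1, rfl⟩, ?_⟩
      rw [dexp_dmap trS hfin g]
      refine dexp_mono hfin h0 (fun t ht => ?_)
      exact hg2 (trS t) (mem_dsupp_dmap_of_mem h0 hfin trS ht) t ht rfl
  · rintro r ⟨f, hf, rfl⟩
    constructor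
    · have H : ∀ t ∈ dsupp Δ₀, ∃ rt, VBarMem omA t rt ∧ f (trS t) ≤ rt := by
        intro t ht
        have hy := mem_dsupp_dmap_of_mem h0 hfin trS ht
        exact (ML2 (hf (trS t) hy) t (hsw t ht) rfl).1
      choose! g hg1 hg2 using H
      refine ⟨dexp Δ₀ g, ⟨g, hg1, rfl⟩, ?_⟩
      rw [dexp_dmap trS hfin f]
      exact dexp_mono hfin h0 hg2
    · have H : ∀ t ∈ dsupp Δ₀, ∃ rt, VBarMem omA t rt ∧ rt ≤ f (trS t) := by
        intro t ht
        have hy := mem_dsupp_dmap_of_mem h0 hfin trS ht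
        exact (ML2 (hf (trS t) hy) t (hsw t ht) rfl).2
      choose! g hg1 hg2 using H
      refine ⟨dexp Δ₀ g, ⟨g, hg1, rfl⟩, ?_⟩
      rw [dexp_dmap trS hfin f]
      exact dexp_mono hfin h0 hg2

end AuxFinal

/-- Proposition 5.1: state-based testing is at least as discriminating
as action-based testing. -/
theorem state_based_implies_action_based (A : Type) [Fintype A] (P Q : PCSP A)
    (hP : PWF P) (hQ : PWF Q) :
    (PMay P Q → PMayBar P Q) ∧ (PMust P Q → PMustBar P Q) := by
  have heqP : ∀ T : PCSP (TAct A),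
      dmap trS (applyTest T P).interp = (applyTest (trP T) P).interp := by
    intro T
    rw [← trP_applyTest, trP_interp]
  have heqQ : ∀ T : PCSP (TAct A),
      dmap trS (applyTest T Q).interp = (applyTest (trP T) Q).interp := by
    intro T
    rw [← trP_applyTest, trP_interp]
  constructor
  · intro hmay T hT x hx
    obtain ⟨hdP, hswP⟩ := interp_dist _ (pwf_applyTest hT hP)
    obtain ⟨hdQ, hswQ⟩ := interp_dist _ (pwf_applyTest hT hQ)
    obtain ⟨⟨x₁, hx₁, hle₁⟩, -⟩ := (MLD hdP hswP).1 x hx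
    rw [heqP T] at hx₁
    obtain ⟨y, hy, hle₂⟩ := hmay (trP T) (trP_pwf T hT) x₁ hx₁
    rw [show Aset (trP T) Q = VD omA (applyTest (trP T) Q).interp from rfl,
      ← heqQ T] at hy
    obtain ⟨⟨y₁, hy₁, hle₃⟩, -⟩ := (MLD hdQ hswQ).2 y hy
    exact ⟨y₁, hy₁, by linarith⟩
  · intro hmust T hT y hy
    obtain ⟨hdP, hswP⟩ := interp_dist _ (pwf_applyTest hT hP)
    obtain ⟨hdQ, hswQ⟩ := interp_dist _ (pwf_applyTest hT hQ)
    obtain ⟨-, ⟨y₂, hy₂, hle₁⟩⟩ := (MLD hdQ hswQ).1 y hy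
    rw [heqQ T] at hy₂
    obtain ⟨x, hx, hle₂⟩ := hmust (trP T) (trP_pwf T hT) y₂ hy₂
    rw [show Aset (trP T) P = VD omA (applyTest (trP T) P).interp from rfl,
      ← heqP T] at hx
    obtain ⟨-, ⟨x₂, hx₂, hle₃⟩⟩ := (MLD hdP hswP).2 x hx
    exact ⟨x₂, hx₂, by linarith⟩

end PaperPCSP
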